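/- arXiv:1904.10826 — 3 statements merged into one kernel-verified Lean document; each statement's English description precedes it below -/
import Mathlib

section
/- If G is a countable discrete abelian group equipped with counting measure, then the Feichtinger algebra coincides with ℓ¹: an element ξ ∈ ℓ²(G) satisfies ∫_{G×Ĝ} |⟨ξ, π(z)ξ⟩| d(μ_G ⊗ μ_Ĝ)(z) < ∞ if and only if Σ_{t∈G} |ξ(t)| < ∞. -/
/- Time-frequency analysis on a locally compact abelian (multiplicatively written) group `H`.
`PontryaginDual H` is the dual group (continuous characters into the circle group) with the
compact-open topology.  `L²(H)` is `MeasureTheory.Lp ℂ 2 μ` for a Haar measure `μ` on `H`. -/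

open MeasureTheory ComplexConjugate

noncomputable section

namespace Gabor

variable {H : Type*} [CommGroup H] [TopologicalSpace H] [IsTopologicalGroup H]
  [MeasurableSpace H] [BorelSpace H]

/-- The function defining the time-frequency shift `π(x,ω)ξ : t ↦ ω(t)·ξ(t·x⁻¹)`
(the group is written multiplicatively, so `t·x⁻¹` is "`t - x`") lies in `L²`. -/
theorem tf_memℒp (μ : Measure H) [μ.IsMulRightInvariant]
    (z : H × PontryaginDual H) (ξ : Lp ℂ 2 μ) :
    MemLp (fun t => (z.2 t : ℂ) * ξ (t * z.1⁻¹)) 2 μ := by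
  have hmp : MeasurePreserving (fun t : H => t * z.1⁻¹) μ μ :=
    measurePreserving_mul_right μ z.1⁻¹
  have h1 : MemLp (fun t => ξ (t * z.1⁻¹)) 2 μ :=
    (Lp.memLp ξ).comp_measurePreserving hmp
  have hω : Continuous fun t : H => (z.2 t : ℂ) :=
    continuous_subtype_val.comp (map_continuous z.2)
  refine MemLp.of_le h1 (hω.aestronglyMeasurable.mul h1.1) ?_
  filter_upwards with t
  rw [norm_mul]
  exact mul_le_of_le_one_left (norm_nonneg _) (le_of_eq (Circle.norm_coe (z.2 t)))

/-- The time-frequency shift `π(z) = π(x,ω) : L²(H) → L²(H)`, `(π(x,ω)ξ)(t) = ω(t)·ξ(t·x⁻¹)`. -/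
def tf (μ : Measure H) [μ.IsMulRightInvariant]
    (z : H × PontryaginDual H) (ξ : Lp ℂ 2 μ) : Lp ℂ 2 μ :=
  (tf_memℒp μ z ξ).toLp _

/-- `stft μ ξ η z` is the inner product `⟨ξ, π(z)η⟩` of the paper (which is linear in `ξ` and
conjugate-linear in `π(z)η`; Mathlib's `inner` is conjugate-linear in its first argument). -/
def stft (μ : Measure H) [μ.IsMulRightInvariant] (ξ η : Lp ℂ 2 μ)
    (z : H × PontryaginDual H) : ℂ :=
  @inner ℂ _ _ (tf μ z η) ξ

variable [MeasurableSpace (PontryaginDual H)]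

/-- Membership in the Feichtinger algebra `S₀(H)`: `∫_{H×Ĥ} |⟨ξ, π(z)ξ⟩| dz < ∞`. -/
def IsS0 (μ : Measure H) [μ.IsMulRightInvariant]
    (μd : Measure (PontryaginDual H)) (ξ : Lp ℂ 2 μ) : Prop :=
  ∫⁻ z : H × PontryaginDual H, (‖stft μ ξ ξ z‖₊ : ENNReal) ∂(μ.prod μd) < ⊤

/-- The Gabor system `(π(z)η)_{z ∈ Λ}` is a Bessel family with Bessel bound `D`:
`∫_Λ |⟨ξ, π(z)η⟩|² dμ_Λ(z) ≤ D·‖ξ‖₂²` for all `ξ ∈ L²(H)`. -/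
def IsBesselBound (μ : Measure H) [μ.IsMulRightInvariant]
    (Λ : Set (H × PontryaginDual H)) (μΛ : Measure Λ)
    (η : Lp ℂ 2 μ) (D : ℝ) : Prop :=
  ∀ ξ : Lp ℂ 2 μ,
    ∫⁻ z : Λ, (‖stft μ ξ η (z : H × PontryaginDual H)‖₊ : ENNReal) ^ 2 ∂μΛ ≤
      ENNReal.ofReal D * (‖ξ‖₊ : ENNReal) ^ 2

/-- The Gabor system `(π(z)η)_{z ∈ Λ}` is a Bessel family. -/
def IsBessel (μ : Measure H) [μ.IsMulRightInvariant]
    (Λ : Set (H × PontryaginDual H)) (μΛ : Measure Λ)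
    (η : Lp ℂ 2 μ) : Prop :=
  ∃ D : ℝ, 0 < D ∧ IsBesselBound μ Λ μΛ η D

/-- The square `‖η‖_{B_Λ}²` of the Bessel norm of `η`, i.e.
`sup_{‖ξ‖₂=1} ∫_Λ |⟨ξ, π(z)η⟩|² dμ_Λ(z)`, as a value in `[0,∞]`. -/
def besselSq (μ : Measure H) [μ.IsMulRightInvariant]
    (Λ : Set (H × PontryaginDual H)) (μΛ : Measure Λ)
    (η : Lp ℂ 2 μ) : ENNReal :=
  ⨆ ξ : {ξ : Lp ℂ 2 μ // ‖ξ‖ = 1},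
    ∫⁻ z : Λ, (‖stft μ (ξ : Lp ℂ 2 μ) η (z : H × PontryaginDual H)‖₊ : ENNReal) ^ 2 ∂μΛ

/-- The concrete realization of the Heisenberg module `E_Λ(H)` inside `L²(H)`: all `η ∈ L²(H)`
generating a Bessel family over `Λ` which are approximated arbitrarily well, in the Bessel
norm, by elements of the Feichtinger algebra `S₀(H)`. -/
def heisSet (μ : Measure H) [μ.IsMulRightInvariant]
    (μd : Measure (PontryaginDual H))
    (Λ : Set (H × PontryaginDual H)) (μΛ : Measure Λ) : Set (Lp ℂ 2 μ) :=
  {η | IsBessel μ Λ μΛ η ∧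
    ∀ ε : ℝ, 0 < ε → ∃ ζ : Lp ℂ 2 μ, IsS0 μ μd ζ ∧
      besselSq μ Λ μΛ (η - ζ) ≤ ENNReal.ofReal (ε ^ 2)}

end Gabor

namespace Gabor

/-- On a discrete group, the counting measure is right-translation invariant (it is the
Haar measure of the discrete group). -/
instance countingMeasure_isMulRightInvariant
    {G : Type*} [CommGroup G] [MeasurableSpace G] [MeasurableSingletonClass G]
    [MeasurableMul G] :
    (Measure.count : Measure G).IsMulRightInvariant := by
  constructor
  intro g
  ext s hs
  rw [Measure.map_apply (measurable_mul_const g) hs,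
    Measure.count_apply hs, Measure.count_apply (measurable_mul_const g hs)]
  exact congrArg _ (Set.encard_congr ((Equiv.mulRight g).subtypeEquiv fun x => Iff.rfl))

end Gabor

open Gabor


section Aux

open Filter Topology

/-- For a discrete domain, the compact-open topology on `C(X, Y)` is induced by the
product topology on `X → Y`. -/
theorem inducing_coe_of_discrete {X Y : Type*} [TopologicalSpace X] [DiscreteTopology X]
    [TopologicalSpace Y] : Topology.IsInducing ((⇑) : C(X, Y) → (X → Y)) := by
  constructor
  refine le_antisymm (continuous_iff_le_induced.mp (continuous_coeFun)) ?_
  rw [ContinuousMap.compactOpen_eq]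
  refine le_generateFrom ?_
  rintro s ⟨K, hK, U, hU, rfl⟩
  simp only [Set.mem_setOf_eq] at hK hU
  have h2 : IsOpen {g : X → Y | Set.MapsTo g K U} := by
    have h3 : {g : X → Y | Set.MapsTo g K U} = ⋂ x ∈ K, (fun g : X → Y => g x) ⁻¹' U := by
      ext g; simp [Set.MapsTo]
    rw [h3]
    exact hK.finite_of_discrete.isOpen_biInter fun x _ => (continuous_apply x).isOpen_preimage _ hU
  have h : ((fun K U => {f : C(X, Y) | Set.MapsTo f K U}) K U)
      = ((⇑) : C(X,Y) → X → Y) ⁻¹' {g | Set.MapsTo g K U} := rfl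
  rw [h]
  exact isOpen_induced h2

variable {G : Type*} [CommGroup G] [TopologicalSpace G] [DiscreteTopology G]

theorem pd_inducing : Topology.IsInducing (fun (ω : PontryaginDual G) (t : G) => (ω t : Circle)) :=
  inducing_coe_of_discrete.comp (ContinuousMonoidHom.isInducing_toContinuousMap G Circle)

theorem pd_closed_range :
    IsClosed (Set.range (fun (ω : PontryaginDual G) (t : G) => (ω t : Circle))) := by
  have h : Set.range (fun (ω : PontryaginDual G) (t : G) => (ω t : Circle)) =
      {f : G → Circle | f 1 = 1 ∧ ∀ x y, f (x * y) = f x * f y} := by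
    ext f
    constructor
    · rintro ⟨ω, rfl⟩
      exact ⟨map_one ω, fun x y => map_mul ω x y⟩
    · rintro ⟨h1, hmul⟩
      exact ⟨⟨⟨⟨f, h1⟩, hmul⟩, continuous_of_discreteTopology⟩, rfl⟩
  rw [h]
  simp only [Set.setOf_and, Set.setOf_forall]
  refine IsClosed.inter (isClosed_eq (continuous_apply 1) continuous_const) ?_
  refine isClosed_iInter fun x => isClosed_iInter fun y => ?_
  exact isClosed_eq (continuous_apply (x * y)) ((continuous_apply x).mul (continuous_apply y))

/-- The Pontryagin dual of a discrete abelian group is compact. -/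
instance pd_compactSpace : CompactSpace (PontryaginDual G) := by
  refine ⟨?_⟩
  rw [pd_inducing.isCompact_iff, Set.image_univ]
  exact pd_closed_range.isCompact

/-- The additive homomorphism `q ↦ exp (2 π i q)` from `ℚ` to the circle. -/
noncomputable def qexp : ℚ →+ Additive Circle where
  toFun q := Additive.ofMul (Circle.exp (2 * Real.pi * q))
  map_zero' := by simp
  map_add' x y := by
    have : ((x + y : ℚ) : ℝ) = (x : ℝ) + y := by push_cast; ring
    simp only [this, mul_add, Circle.exp_add]
    rfl

theorem qexp_ker : ∀ q ∈ AddSubgroup.zmultiples (1 : ℚ), qexp q = 0 := by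
  rintro q ⟨n, rfl⟩
  have : ((n • (1:ℚ) : ℚ) : ℝ) = (n : ℝ) := by push_cast; simp
  show Additive.ofMul (Circle.exp _) = 0
  rw [this, Circle.exp_two_pi_mul_int]
  rfl

/-- The induced homomorphism `ℚ ⧸ ℤ → Circle`. -/
noncomputable def qcirc : AddCircle (1 : ℚ) →+ Additive Circle :=
  QuotientAddGroup.lift _ qexp qexp_ker

theorem qcirc_ne_zero {x : AddCircle (1 : ℚ)} (hx : x ≠ 0) : qcirc x ≠ 0 := by
  induction x using QuotientAddGroup.induction_on with
  | H q =>
    intro h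
    apply hx
    have h' : Circle.exp (2 * Real.pi * q) = 1 := congrArg Additive.toMul h
    rw [Circle.exp_eq_one] at h'
    obtain ⟨n, hn⟩ := h'
    have h2 : (2 * Real.pi) * (q:ℝ) = (2 * Real.pi) * n := by linarith
    have hq : (q : ℝ) = (n : ℝ) :=
      mul_left_cancel₀ (by positivity : (0:ℝ) < 2*Real.pi).ne' h2
    have : q = (n : ℚ) := by exact_mod_cast hq
    rw [this]
    exact (AddCircle.coe_eq_zero_iff _).mpr ⟨n, by simp⟩

/-- Characters of a discrete abelian group separate points. -/
theorem exists_pd_apply_ne_one {g : G} (hg : g ≠ 1) : ∃ ω : PontryaginDual G, ω g ≠ 1 := by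
  have ha : (Additive.ofMul g : Additive G) ≠ 0 := hg
  obtain ⟨c, hc⟩ := CharacterModule.exists_character_apply_ne_zero_of_ne_zero ha
  refine ⟨⟨MonoidHom.mk' (fun x => (qcirc (c (Additive.ofMul x))).toMul) ?_,
    continuous_of_discreteTopology⟩, ?_⟩
  · intro x y
    show (qcirc (c (Additive.ofMul x + Additive.ofMul y))).toMul = _
    rw [map_add, map_add]
    rfl
  · show (qcirc (c (Additive.ofMul g))).toMul ≠ 1
    intro h
    exact qcirc_ne_zero hc h

variable [MeasurableSpace (PontryaginDual G)] [BorelSpace (PontryaginDual G)]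
  (μd : Measure (PontryaginDual G)) [μd.IsHaarMeasure]

/-- Orthogonality of characters: a nontrivial evaluation character integrates to zero. -/
theorem integral_eval_eq_zero {g : G} (hg : g ≠ 1) : ∫ ω, ((ω : PontryaginDual G) g : ℂ) ∂μd = 0 := by
  obtain ⟨ω₀, hω₀⟩ := exists_pd_apply_ne_one hg
  set e : PontryaginDual G ≃ᵐ PontryaginDual G := (Homeomorph.mulLeft ω₀).toMeasurableEquiv
  have h1 : ∫ ω, ((ω : PontryaginDual G) g : ℂ) ∂μd
      = ∫ ω, (((ω₀ * ω) : PontryaginDual G) g : ℂ) ∂μd := by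
    conv_lhs => rw [← MeasureTheory.map_mul_left_eq_self μd ω₀]
    rw [show Measure.map (fun ω => ω₀ * ω) μd = Measure.map e μd from rfl,
      MeasureTheory.integral_map_equiv]
    rfl
  have h2 : ∀ ω : PontryaginDual G, (((ω₀ * ω) : PontryaginDual G) g : ℂ)
      = (ω₀ g : ℂ) * (ω g : ℂ) := fun ω => rfl
  simp only [h2, MeasureTheory.integral_const_mul] at h1
  have h3 : ((ω₀ g : ℂ) - 1) * ∫ ω, ((ω : PontryaginDual G) g : ℂ) ∂μd = 0 := by
    rw [sub_mul, one_mul, ← h1, sub_self]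
  rcases mul_eq_zero.mp h3 with h | h
  · rw [sub_eq_zero] at h
    exact absurd (by ext1; simpa using h : ω₀ g = 1) hω₀
  · exact h

end Aux

section Main

open Filter Topology
open scoped ENNReal

variable {G : Type*} [CommGroup G] [Countable G] [TopologicalSpace G] [DiscreteTopology G]
    [IsTopologicalGroup G] [MeasurableSpace G] [BorelSpace G]

local notation "μc" => (Measure.count : Measure G)

theorem count_funext {β : Type*} {f g : G → β} (h : f =ᵐ[μc] g) : f = g := by
  funext x
  by_contra hx
  have h0 : Measure.count {y : G | ¬ f y = g y} = 0 := h
  rw [Measure.count_eq_zero_iff] at h0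
  exact absurd (h0 ▸ hx : x ∈ (∅ : Set G)) (Set.notMem_empty x)

theorem sq_sum_lt_top (ξ : Lp ℂ 2 μc) : ∑' t : G, (‖(ξ : G → ℂ) t‖₊ : ℝ≥0∞) ^ 2 < ⊤ := by
  have h := (Lp.memLp ξ)
  rw [memLp_two_iff_integrable_sq_norm (Lp.aestronglyMeasurable ξ)] at h
  have h2 := h.hasFiniteIntegral
  rw [HasFiniteIntegral, lintegral_count] at h2
  refine lt_of_le_of_lt (le_of_eq ?_) h2
  refine tsum_congr fun t => ?_
  rw [← ENNReal.coe_pow]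
  congr 1
  ext
  simp [NNReal.coe_pow]

theorem ennreal_mul_le_sq_add_sq (a b : ℝ≥0∞) : a * b ≤ a ^ 2 + b ^ 2 := by
  rcases le_total a b with h | h
  · calc a * b ≤ b * b := mul_le_mul_left h b
    _ = b ^ 2 := (sq b).symm
    _ ≤ a ^ 2 + b ^ 2 := le_add_self
  · calc a * b ≤ a * a := mul_le_mul_right h a
    _ = a ^ 2 := (sq a).symm
    _ ≤ a ^ 2 + b ^ 2 := le_self_add

theorem shift_tsum_eq (f : G → ℝ≥0∞) (x : G) : ∑' t : G, f (t * x⁻¹) = ∑' t : G, f t :=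
  ((Equiv.mulRight x⁻¹).tsum_eq f)

theorem prod_sum_lt_top (ξ : Lp ℂ 2 μc) (x : G) :
    ∑' t : G, (‖(ξ : G → ℂ) (t * x⁻¹)‖₊ : ℝ≥0∞) * (‖(ξ : G → ℂ) t‖₊ : ℝ≥0∞) < ⊤ := by
  refine lt_of_le_of_lt (Summable.tsum_le_tsum (fun t => ennreal_mul_le_sq_add_sq _ _)
    ENNReal.summable ENNReal.summable) ?_
  rw [ENNReal.tsum_add]
  refine ENNReal.add_lt_top.mpr ⟨?_, sq_sum_lt_top ξ⟩
  rw [shift_tsum_eq (fun t => (‖(ξ : G → ℂ) t‖₊ : ℝ≥0∞) ^ 2) x]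
  exact sq_sum_lt_top ξ

theorem tf_coe (z : G × PontryaginDual G) (ξ : Lp ℂ 2 μc) :
    ((tf μc z ξ : Lp ℂ 2 μc) : G → ℂ) = fun t => (z.2 t : ℂ) * (ξ : G → ℂ) (t * z.1⁻¹) :=
  count_funext ((tf_memℒp μc z ξ).coeFn_toLp)

theorem term_nnnorm (ξ : Lp ℂ 2 μc) (z : G × PontryaginDual G) (t : G) :
    ‖(starRingEnd ℂ) ((z.2 t : ℂ) * (ξ : G → ℂ) (t * z.1⁻¹)) * (ξ : G → ℂ) t‖₊
      = ‖(ξ : G → ℂ) (t * z.1⁻¹)‖₊ * ‖(ξ : G → ℂ) t‖₊ := by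
  rw [nnnorm_mul, RCLike.nnnorm_conj, nnnorm_mul]
  have h : ‖(z.2 t : ℂ)‖₊ = 1 := by
    ext
    simp [Circle.norm_coe]
  rw [h, one_mul]

theorem stft_term_integrable (ξ : Lp ℂ 2 μc) (z : G × PontryaginDual G) :
    Integrable (fun t : G =>
      (starRingEnd ℂ) ((z.2 t : ℂ) * (ξ : G → ℂ) (t * z.1⁻¹)) * (ξ : G → ℂ) t) μc := by
  refine ⟨(measurable_of_countable _).aestronglyMeasurable, ?_⟩
  rw [HasFiniteIntegral, lintegral_count]
  refine lt_of_le_of_lt (le_of_eq (tsum_congr fun t => ?_)) (prod_sum_lt_top ξ z.1)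
  rw [enorm_eq_nnnorm, ← ENNReal.coe_mul, term_nnnorm]

theorem stft_eq (ξ : Lp ℂ 2 μc) (z : G × PontryaginDual G) :
    stft μc ξ ξ z = ∑' t : G,
      (starRingEnd ℂ) ((z.2 t : ℂ) * (ξ : G → ℂ) (t * z.1⁻¹)) * (ξ : G → ℂ) t := by
  rw [stft, MeasureTheory.L2.inner_def]
  have h : ∀ t : G, (inner ℂ ((tf μc z ξ : Lp ℂ 2 μc) t) ((ξ : G → ℂ) t) : ℂ)
      = (starRingEnd ℂ) ((z.2 t : ℂ) * (ξ : G → ℂ) (t * z.1⁻¹)) * (ξ : G → ℂ) t := by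
    intro t
    rw [RCLike.inner_apply, mul_comm]
    congr 2
    exact congrFun (tf_coe z ξ) t
  rw [integral_congr_ae (Filter.Eventually.of_forall h),
    MeasureTheory.integral_countable' (stft_term_integrable ξ z)]
  refine tsum_congr fun t => ?_
  rw [measureReal_def, Measure.count_singleton]
  simp

theorem stft_nnnorm_le (ξ : Lp ℂ 2 μc) (z : G × PontryaginDual G) :
    (‖stft μc ξ ξ z‖₊ : ℝ≥0∞) ≤
      ∑' t : G, (‖(ξ : G → ℂ) (t * z.1⁻¹)‖₊ : ℝ≥0∞) * (‖(ξ : G → ℂ) t‖₊ : ℝ≥0∞) := by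
  rw [stft_eq]
  refine le_trans (ENNReal.coe_le_coe.mpr (nnnorm_tsum_le ?_)) ?_
  · rw [← ENNReal.tsum_coe_ne_top_iff_summable]
    refine ne_top_of_le_ne_top (prod_sum_lt_top ξ z.1).ne (le_of_eq (tsum_congr fun t => ?_))
    rw [← ENNReal.coe_mul, term_nnnorm]
  · rw [ENNReal.coe_tsum]
    · refine Summable.tsum_le_tsum (fun t => ?_) ENNReal.summable ENNReal.summable
      rw [← ENNReal.coe_mul, term_nnnorm]
    · rw [← ENNReal.tsum_coe_ne_top_iff_summable]
      refine ne_top_of_le_ne_top (prod_sum_lt_top ξ z.1).ne (Summable.tsum_le_tsum (fun t => ?_)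
        ENNReal.summable ENNReal.summable)
      rw [← ENNReal.coe_mul, term_nnnorm]

theorem continuous_pd_eval {G : Type*} [CommGroup G] [TopologicalSpace G]
    (t : G) : Continuous fun ω : PontryaginDual G => ((ω t : Circle) : ℂ) := by
  have h0 : Continuous fun f : C(G, Circle) => f t := continuous_eval_const t
  have h : Continuous fun ω : PontryaginDual G => (ω t : Circle) :=
    h0.comp (ContinuousMonoidHom.isInducing_toContinuousMap G Circle).continuous
  exact continuous_subtype_val.comp h

theorem summable_stft_term (ξ : Lp ℂ 2 μc) (z : G × PontryaginDual G) :
    Summable (fun t : G =>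
      (starRingEnd ℂ) ((z.2 t : ℂ) * (ξ : G → ℂ) (t * z.1⁻¹)) * (ξ : G → ℂ) t) := by
  apply Summable.of_nnnorm
  rw [← ENNReal.tsum_coe_ne_top_iff_summable]
  refine ne_top_of_le_ne_top (prod_sum_lt_top ξ z.1).ne (le_of_eq (tsum_congr fun t => ?_))
  rw [term_nnnorm, ENNReal.coe_mul]

theorem measurable_stft [MeasurableSpace (PontryaginDual G)] [BorelSpace (PontryaginDual G)]
    (ξ : Lp ℂ 2 μc) :
    Measurable (fun z : G × PontryaginDual G => stft μc ξ ξ z) := by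
  have hterm : ∀ t : G, Measurable (fun z : G × PontryaginDual G =>
      (starRingEnd ℂ) ((z.2 t : ℂ) * (ξ : G → ℂ) (t * z.1⁻¹)) * (ξ : G → ℂ) t) := by
    intro t
    have h1 : Measurable fun z : G × PontryaginDual G => (z.2 t : ℂ) :=
      ((continuous_pd_eval t).measurable).comp measurable_snd
    have h2 : Measurable fun z : G × PontryaginDual G => (ξ : G → ℂ) (t * z.1⁻¹) :=
      (measurable_of_countable (fun x : G => (ξ : G → ℂ) (t * x⁻¹))).comp measurable_fst
    exact (Complex.continuous_conj.measurable.comp (h1.mul h2)).mul measurable_const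
  have key : (fun z : G × PontryaginDual G => stft μc ξ ξ z) = fun z => ∑' t : G,
      (starRingEnd ℂ) ((z.2 t : ℂ) * (ξ : G → ℂ) (t * z.1⁻¹)) * (ξ : G → ℂ) t := by
    funext z; exact stft_eq ξ z
  rw [key]
  refine measurable_of_tendsto_metrizable' atTop
    (f := fun F : Finset G => fun z : G × PontryaginDual G => ∑ t ∈ F,
      (starRingEnd ℂ) ((z.2 t : ℂ) * (ξ : G → ℂ) (t * z.1⁻¹)) * (ξ : G → ℂ) t)
    (fun F => F.measurable_sum fun t _ => hterm t) ?_
  rw [tendsto_pi_nhds]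
  intro z
  exact (summable_stft_term ξ z).hasSum

theorem slice_lower_bound [MeasurableSpace (PontryaginDual G)] [BorelSpace (PontryaginDual G)]
    (μd : Measure (PontryaginDual G)) [μd.IsHaarMeasure] (ξ : Lp ℂ 2 μc) (x t₀ : G) :
    (‖(ξ : G → ℂ) (t₀ * x⁻¹)‖₊ : ℝ≥0∞) * (‖(ξ : G → ℂ) t₀‖₊ : ℝ≥0∞) * μd Set.univ
      ≤ ∫⁻ ω, (‖stft μc ξ ξ (x, ω)‖₊ : ℝ≥0∞) ∂μd := by
  haveI : IsFiniteMeasure μd := inferInstance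
  set ξr : G → ℂ := ((ξ : G → ℂ)) with hξr
  set c : G → ℂ := fun s => (starRingEnd ℂ) (ξr (s * x⁻¹)) * ξr s with hc
  have hcn : ∀ s, (‖c s‖₊ : ℝ≥0∞) = (‖ξr (s * x⁻¹)‖₊ : ℝ≥0∞) * (‖ξr s‖₊ : ℝ≥0∞) := by
    intro s
    rw [hc, nnnorm_mul, RCLike.nnnorm_conj, ENNReal.coe_mul]
  have hc_sum : ∑' s : G, (‖c s‖₊ : ℝ≥0∞) < ⊤ := by
    rw [tsum_congr hcn]; exact prod_sum_lt_top ξ x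
  set f : G → PontryaginDual G → ℂ := fun s ω => c s * ((ω (s⁻¹ * t₀) : Circle) : ℂ) with hf
  -- the integrand identity
  have hstft : ∀ ω : PontryaginDual G,
      stft μc ξ ξ (x, ω) * ((ω t₀ : Circle) : ℂ) = ∑' s : G, f s ω := by
    intro ω
    rw [stft_eq, ← tsum_mul_right]
    refine tsum_congr fun s => ?_
    show (starRingEnd ℂ) (((ω s : Circle) : ℂ) * ξr (s * x⁻¹)) * ξr s * ((ω t₀ : Circle) : ℂ)
      = c s * ((ω (s⁻¹ * t₀) : Circle) : ℂ)
    rw [map_mul, ← Circle.coe_inv_eq_conj, ← map_inv, map_mul ω, Circle.coe_mul, hc]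
    ring
  -- interchange of sum and integral
  have hmeas : ∀ s : G, AEStronglyMeasurable (f s) μd := by
    intro s
    exact (continuous_const.mul (continuous_pd_eval (s⁻¹ * t₀))).aestronglyMeasurable
  have hfnorm : ∀ s (ω : PontryaginDual G), (‖f s ω‖₊ : ℝ≥0∞) = (‖c s‖₊ : ℝ≥0∞) := by
    intro s ω
    rw [hf, nnnorm_mul]
    have h : ‖((ω (s⁻¹ * t₀) : Circle) : ℂ)‖₊ = 1 := by ext; simp [Circle.norm_coe]
    rw [h, mul_one]
  have hbound : ∑' s : G, ∫⁻ ω, (‖f s ω‖₊ : ℝ≥0∞) ∂μd ≠ ⊤ := by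
    have h : ∀ s : G, ∫⁻ ω, (‖f s ω‖₊ : ℝ≥0∞) ∂μd = (‖c s‖₊ : ℝ≥0∞) * μd Set.univ := by
      intro s
      rw [lintegral_congr (hfnorm s), lintegral_const]
    rw [tsum_congr h, ENNReal.tsum_mul_right]
    exact ENNReal.mul_ne_top hc_sum.ne (measure_ne_top μd _)
  have hJ : ∫ ω, (∑' s : G, f s ω) ∂μd = (μd Set.univ).toReal • c t₀ := by
    rw [MeasureTheory.integral_tsum hmeas hbound]
    rw [tsum_eq_single t₀ ?_]
    · have h1 : ∀ ω : PontryaginDual G, f t₀ ω = c t₀ := by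
        intro ω
        rw [hf]
        simp
      rw [integral_congr_ae (Filter.Eventually.of_forall h1), integral_const]
      rfl
    · intro s hs
      have hg : s⁻¹ * t₀ ≠ 1 := by
        rw [Ne, inv_mul_eq_one]
        exact fun h => hs h
      have : ∫ ω, f s ω ∂μd = c s * ∫ ω, ((ω (s⁻¹ * t₀) : Circle) : ℂ) ∂μd :=
        MeasureTheory.integral_const_mul _ _
      rw [this, integral_eval_eq_zero μd hg, mul_zero]
  -- put everything together
  calc (‖ξr (t₀ * x⁻¹)‖₊ : ℝ≥0∞) * (‖ξr t₀‖₊ : ℝ≥0∞) * μd Set.univ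
      = (‖∫ ω, (∑' s : G, f s ω) ∂μd‖₊ : ℝ≥0∞) := by
        rw [hJ, nnnorm_smul, ENNReal.coe_mul, ← hcn t₀]
        have h : (‖(μd Set.univ).toReal‖₊ : ℝ≥0∞) = μd Set.univ := by
          rw [Real.nnnorm_of_nonneg ENNReal.toReal_nonneg]
          exact ENNReal.coe_toNNReal (measure_ne_top μd _)
        rw [h, mul_comm]
    _ ≤ ∫⁻ ω, (‖∑' s : G, f s ω‖₊ : ℝ≥0∞) ∂μd :=
        MeasureTheory.enorm_integral_le_lintegral_enorm _
    _ = ∫⁻ ω, (‖stft μc ξ ξ (x, ω)‖₊ : ℝ≥0∞) ∂μd := by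
        refine lintegral_congr fun ω => ?_
        rw [← hstft ω, nnnorm_mul]
        have h : ‖((ω t₀ : Circle) : ℂ)‖₊ = 1 := by ext; simp [Circle.norm_coe]
        rw [h, mul_one]

end Main

/-- If `G` is a countable discrete abelian group equipped with counting
measure, then the Feichtinger algebra coincides with `ℓ¹`: an element `ξ ∈ ℓ²(G)` satisfies
`∫_{G×Ĝ} |⟨ξ, π(z)ξ⟩| d(μ_G ⊗ μ_Ĝ)(z) < ∞` if and only if `Σ_{t∈G} |ξ(t)| < ∞`. -/
theorem feichtinger_eq_ell_one_of_discrete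
    {G : Type*} [CommGroup G] [Countable G] [TopologicalSpace G] [DiscreteTopology G]
    [IsTopologicalGroup G] [MeasurableSpace G] [BorelSpace G]
    [MeasurableSpace (PontryaginDual G)] [BorelSpace (PontryaginDual G)]
    (μd : Measure (PontryaginDual G)) [μd.IsHaarMeasure]
    (ξ : Lp ℂ 2 (Measure.count : Measure G)) :
    IsS0 (Measure.count : Measure G) μd ξ ↔
      ∑' t : G, (‖(ξ : G → ℂ) t‖₊ : ENNReal) < ⊤ := by
  haveI : IsFiniteMeasure μd := inferInstance
  constructor
  · intro hS0
    have hS0' : ∫⁻ z : G × PontryaginDual G,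
        (‖stft (Measure.count : Measure G) ξ ξ z‖₊ : ENNReal)
        ∂((Measure.count : Measure G).prod μd) < ⊤ := hS0
    rw [MeasureTheory.lintegral_prod _ ((measurable_stft ξ).nnnorm.coe_nnreal_ennreal).aemeasurable,
      lintegral_count] at hS0'
    by_cases hz : ∀ t : G, (ξ : G → ℂ) t = 0
    · have h0 : ∀ t : G, (‖(ξ : G → ℂ) t‖₊ : ENNReal) = 0 := fun t => by simp [hz t]
      rw [tsum_congr h0]
      simp
    · push_neg at hz
      obtain ⟨t₀, ht₀⟩ := hz
      have hb : ∀ x : G, (‖(ξ : G → ℂ) (t₀ * x⁻¹)‖₊ : ENNReal) *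
          ((‖(ξ : G → ℂ) t₀‖₊ : ENNReal) * μd Set.univ)
          ≤ ∫⁻ ω, (‖stft (Measure.count : Measure G) ξ ξ (x, ω)‖₊ : ENNReal) ∂μd := by
        intro x
        rw [← mul_assoc]
        exact slice_lower_bound μd ξ x t₀
      have hsum := (Summable.tsum_le_tsum hb ENNReal.summable ENNReal.summable).trans_lt hS0'
      rw [ENNReal.tsum_mul_right] at hsum
      have he : ∑' x : G, (‖(ξ : G → ℂ) (t₀ * x⁻¹)‖₊ : ENNReal)
          = ∑' t : G, (‖(ξ : G → ℂ) t‖₊ : ENNReal) :=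
        ((Equiv.inv G).trans (Equiv.mulLeft t₀)).tsum_eq
          (fun t => (‖(ξ : G → ℂ) t‖₊ : ENNReal))
      rw [he] at hsum
      by_contra hT
      rw [not_lt, top_le_iff] at hT
      rw [hT] at hsum
      have hne : (‖(ξ : G → ℂ) t₀‖₊ : ENNReal) * μd Set.univ ≠ 0 := by
        refine mul_ne_zero ?_ ?_
        · simpa using ht₀
        · exact (isOpen_univ.measure_pos μd Set.univ_nonempty).ne'
      rw [ENNReal.top_mul hne] at hsum
      exact absurd hsum (lt_irrefl ⊤)
  · intro h1
    show (∫⁻ z : G × PontryaginDual G,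
        (‖stft (Measure.count : Measure G) ξ ξ z‖₊ : ENNReal)
        ∂((Measure.count : Measure G).prod μd)) < ⊤
    have hg : Measurable fun z : G × PontryaginDual G =>
        ∑' t : G, (‖(ξ : G → ℂ) (t * z.1⁻¹)‖₊ : ENNReal) * (‖(ξ : G → ℂ) t‖₊ : ENNReal) :=
      (measurable_of_countable (fun x : G =>
        ∑' t : G, (‖(ξ : G → ℂ) (t * x⁻¹)‖₊ : ENNReal) * (‖(ξ : G → ℂ) t‖₊ : ENNReal))).comp
        measurable_fst
    have hdouble : ∑' x : G, ∑' t : G,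
        (‖(ξ : G → ℂ) (t * x⁻¹)‖₊ : ENNReal) * (‖(ξ : G → ℂ) t‖₊ : ENNReal)
        = (∑' t : G, (‖(ξ : G → ℂ) t‖₊ : ENNReal)) *
          (∑' t : G, (‖(ξ : G → ℂ) t‖₊ : ENNReal)) := by
      rw [ENNReal.tsum_comm]
      have h2 : ∀ t : G, ∑' x : G,
          (‖(ξ : G → ℂ) (t * x⁻¹)‖₊ : ENNReal) * (‖(ξ : G → ℂ) t‖₊ : ENNReal)
          = (∑' s : G, (‖(ξ : G → ℂ) s‖₊ : ENNReal)) * (‖(ξ : G → ℂ) t‖₊ : ENNReal) := by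
        intro t
        rw [ENNReal.tsum_mul_right]
        congr 1
        exact ((Equiv.inv G).trans (Equiv.mulLeft t)).tsum_eq
          (fun s => (‖(ξ : G → ℂ) s‖₊ : ENNReal))
      rw [tsum_congr h2, ENNReal.tsum_mul_left, mul_comm]
    calc ∫⁻ z : G × PontryaginDual G,
        (‖stft (Measure.count : Measure G) ξ ξ z‖₊ : ENNReal)
        ∂((Measure.count : Measure G).prod μd)
        ≤ ∫⁻ z : G × PontryaginDual G,
          (∑' t : G, (‖(ξ : G → ℂ) (t * z.1⁻¹)‖₊ : ENNReal) * (‖(ξ : G → ℂ) t‖₊ : ENNReal))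
          ∂((Measure.count : Measure G).prod μd) :=
        lintegral_mono fun z => stft_nnnorm_le ξ z
      _ = ∫⁻ x : G, ∫⁻ _ω : PontryaginDual G,
          (∑' t : G, (‖(ξ : G → ℂ) (t * x⁻¹)‖₊ : ENNReal) * (‖(ξ : G → ℂ) t‖₊ : ENNReal))
          ∂μd ∂(Measure.count : Measure G) :=
        MeasureTheory.lintegral_prod _ hg.aemeasurable
      _ = ∑' x : G,
          (∑' t : G, (‖(ξ : G → ℂ) (t * x⁻¹)‖₊ : ENNReal) * (‖(ξ : G → ℂ) t‖₊ : ENNReal))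
          * μd Set.univ := by
        rw [lintegral_count]
        exact tsum_congr fun x => lintegral_const _
      _ = ((∑' t : G, (‖(ξ : G → ℂ) t‖₊ : ENNReal)) *
            (∑' t : G, (‖(ξ : G → ℂ) t‖₊ : ENNReal))) * μd Set.univ := by
        rw [ENNReal.tsum_mul_right, hdouble]
      _ < ⊤ := by
        refine ENNReal.mul_lt_top (ENNReal.mul_lt_top h1 h1) (measure_lt_top μd _)
end
end

section
/- Let E be a Hilbert C*-module over a C*-algebra A and let η₁, …, η_k ∈ E. Then there exist constants C, D > 0 such that C·⟨ξ,ξ⟩_A ≤ Σ_{j=1}^k ⟨ξ,η_j⟩_A·⟨η_j,ξ⟩_A ≤ D·⟨ξ,ξ⟩_A for all ξ ∈ E (i.e. (η₁,…,η_k) is a module frame for E) if and only if {η₁,…,η_k} generates E as an A-module, i.e. for every ξ ∈ E there exist a₁, …, a_k ∈ A such that ξ = Σ_{j=1}^k η_j · a_j. -/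
/- Hilbert C*-modules are formalized by Mathlib's `CStarModule A E`: `E` carries a right
`A`-module structure (via `SMul Aᵐᵒᵖ E`, with notation `x <• a`) and an `A`-valued inner
product `⟪x, y⟫_A` which is conjugate-linear in the first variable and `A`-linear in the
second, satisfies `star ⟪x, y⟫ = ⟪y, x⟫` and `0 ≤ ⟪x, x⟫` with `⟪x, x⟫ = 0 ↔ x = 0`, and
induces the norm `‖x‖ = √‖⟪x, x⟫‖`.  Completeness of `E` in this norm is the assumption
`CompleteSpace E`.  Inequalities in `A` refer to the C*-order (`StarOrderedRing A`). -/

open scoped RightActions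

/-- The `CStarModule` class as it stood in Mathlib (December 2024): a right `A`-module structure
given by `SMul Aᵐᵒᵖ E`, with `A`-valued inner product `A`-linear on the right in the second
variable. -/
class CStarModuleRight (A E : Type*) [NonUnitalSemiring A] [StarRing A]
    [Module ℂ A] [AddCommGroup E] [Module ℂ E] [PartialOrder A] [SMul Aᵐᵒᵖ E] [Norm A] [Norm E]
    extends Inner A E where
  inner_add_right {x} {y} {z} : inner x (y + z) = inner x y + inner x z
  inner_self_nonneg {x} : 0 ≤ inner x x
  inner_self {x} : inner x x = 0 ↔ x = 0
  inner_op_smul_right {a : A} {x y : E} : inner x (y <• a) = inner x y * a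
  inner_smul_right_complex {z : ℂ} {x} {y} : inner x (z • y) = z • inner x y
  star_inner x y : star (inner x y) = inner y x
  norm_eq_sqrt_norm_inner_self x : ‖x‖ = Real.sqrt ‖inner x x‖

set_option maxHeartbeats 1000000
set_option synthInstance.maxHeartbeats 200000
set_option linter.unusedSectionVars false

open scoped RightActions

/-- Marker recording the coefficient algebra of a Hilbert module, so that it can be inferred. -/
class CStarCoeff (E : Type*) (A : outParam Type*) : Prop

namespace CStarModuleRight

variable {A E : Type*} [CStarCoeff E A] [NonUnitalCStarAlgebra A] [PartialOrder A] [StarOrderedRing A]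
  [NormedAddCommGroup E] [NormedSpace ℂ E] [SMul Aᵐᵒᵖ E] [CStarModuleRight A E]

local notation "⟪" x ", " y "⟫" => inner (𝕜 := A) x y

lemma inner_add_left {x y z : E} : ⟪x + y, z⟫ = ⟪x, z⟫ + ⟪y, z⟫ := by
  rw [← star_inner z (x + y), inner_add_right, star_add, star_inner, star_inner]

lemma inner_op_smul_left {a : A} {x y : E} : ⟪x <• a, y⟫ = star a * ⟪x, y⟫ := by
  rw [← star_inner y (x <• a), inner_op_smul_right, star_mul, star_inner]

lemma inner_smul_left_complex {z : ℂ} {x y : E} : ⟪z • x, y⟫ = star z • ⟪x, y⟫ := by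
  rw [← star_inner y (z • x), inner_smul_right_complex, star_smul, star_inner]

lemma inner_smul_right_real {z : ℝ} {x y : E} : ⟪x, z • y⟫ = z • ⟪x, y⟫ := by
  rw [← Complex.coe_smul z y, inner_smul_right_complex, Complex.coe_smul]

lemma inner_smul_left_real {z : ℝ} {x y : E} : ⟪z • x, y⟫ = z • ⟪x, y⟫ := by
  rw [← star_inner y (z • x), inner_smul_right_real, star_smul, star_trivial, star_inner]

lemma inner_neg_right {x y : E} : ⟪x, -y⟫ = -⟪x, y⟫ := by
  rw [← neg_one_smul ℂ y, inner_smul_right_complex, neg_one_smul]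

lemma inner_sub_right {x y z : E} : ⟪x, y - z⟫ = ⟪x, y⟫ - ⟪x, z⟫ := by
  rw [sub_eq_add_neg, inner_add_right, inner_neg_right, ← sub_eq_add_neg]

lemma inner_sub_left {x y z : E} : ⟪x - y, z⟫ = ⟪x, z⟫ - ⟪y, z⟫ := by
  rw [← star_inner z (x - y), inner_sub_right, star_sub, star_inner, star_inner]

lemma inner_sum_right {ι : Type*} {s : Finset ι} {x : E} {y : ι → E} :
    ⟪x, ∑ i ∈ s, y i⟫ = ∑ i ∈ s, ⟪x, y i⟫ :=
  map_sum (AddMonoidHom.mk' (fun z : E => ⟪x, z⟫) (fun _ _ => inner_add_right)) y s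

lemma norm_sq_eq {x : E} : ‖x‖ ^ 2 = ‖⟪x, x⟫‖ := by
  rw [norm_eq_sqrt_norm_inner_self (A := A) x, Real.sq_sqrt (norm_nonneg _)]

lemma inner_mul_inner_swap_le {x y : E} : ⟪y, x⟫ * ⟪x, y⟫ ≤ ‖x‖ ^ 2 • ⟪y, y⟫ := by
  rcases eq_or_ne x 0 with h | h
  · subst h
    have h0 : ∀ z : E, ⟪z, 0⟫ = 0 := fun z => by
      rw [← zero_smul ℂ (0 : E), inner_smul_right_complex, zero_smul]
    rw [h0, zero_mul, norm_zero]
    simp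
  · have h₁ : ∀ (a : A),
        (0 : A) ≤ ‖x‖ ^ 2 • (star a * a) - ‖x‖ ^ 2 • (⟪y, x⟫ * a)
                  - ‖x‖ ^ 2 • (star a * ⟪x, y⟫) + ‖x‖ ^ 2 • (‖x‖ ^ 2 • ⟪y, y⟫) := fun a => by
      calc (0 : A) ≤ ⟪x <• a - ‖x‖ ^ 2 • y, x <• a - ‖x‖ ^ 2 • y⟫ := by
                      exact inner_self_nonneg
            _ = star a * ⟪x, x⟫ * a - ‖x‖ ^ 2 • (⟪y, x⟫ * a)
                  - ‖x‖ ^ 2 • (star a * ⟪x, y⟫) + ‖x‖ ^ 2 • (‖x‖ ^ 2 • ⟪y, y⟫) := by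
                      simp only [inner_sub_right, inner_op_smul_right, inner_sub_left,
                        inner_op_smul_left, inner_smul_left_real, smul_mul_assoc,
                        inner_smul_right_real, mul_smul_comm, mul_assoc, sub_mul, mul_sub, smul_sub]
                      abel
            _ ≤ ‖x‖ ^ 2 • (star a * a) - ‖x‖ ^ 2 • (⟪y, x⟫ * a)
                  - ‖x‖ ^ 2 • (star a * ⟪x, y⟫) + ‖x‖ ^ 2 • (‖x‖ ^ 2 • ⟪y, y⟫) := by
                      gcongr
                      calc _ ≤ ‖⟪x, x⟫‖ • (star a * a) :=
                          CStarAlgebra.star_left_conjugate_le_norm_smul (star_inner x x)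
                        _ = ‖x‖ ^ 2 • (star a * a) := by rw [norm_sq_eq]
    specialize h₁ ⟪x, y⟫
    rw [star_inner] at h₁
    simp only [sub_self, zero_sub, le_neg_add_iff_add_le, add_zero] at h₁
    rwa [smul_le_smul_iff_of_pos_left (pow_pos (norm_pos_iff.mpr h) _)] at h₁

variable (E) in
lemma norm_inner_le {x y : E} : ‖⟪x, y⟫‖ ≤ ‖x‖ * ‖y‖ := by
  have := calc ‖⟪x, y⟫‖ ^ 2 = ‖⟪y, x⟫ * ⟪x, y⟫‖ := by
                rw [← star_inner x y, CStarRing.norm_star_mul_self, pow_two]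
    _ ≤ ‖‖x‖ ^ 2 • ⟪y, y⟫‖ := by
                refine CStarAlgebra.norm_le_norm_of_nonneg_of_le ?_ inner_mul_inner_swap_le
                rw [← star_inner x y]
                exact star_mul_self_nonneg _
    _ = ‖x‖ ^ 2 * ‖⟪y, y⟫‖ := by
                rw [norm_smul, Real.norm_eq_abs, abs_of_nonneg (by positivity)]
    _ = ‖x‖ ^ 2 * ‖y‖ ^ 2 := by rw [← norm_sq_eq (A := A) (x := y)]
    _ = (‖x‖ * ‖y‖) ^ 2 := by ring
  exact (pow_le_pow_iff_left₀ (norm_nonneg _) (by positivity) (by norm_num)).mp this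

/-- The inner product as a continuous map in the second variable. -/
noncomputable def innerSL (x : E) : E →L[ℂ] A :=
  LinearMap.mkContinuous
    { toFun := fun y => ⟪x, y⟫
      map_add' := fun _ _ => inner_add_right
      map_smul' := fun _ _ => inner_smul_right_complex } ‖x‖
    (fun y => norm_inner_le E)

lemma innerSL_apply {x y : E} : innerSL x y = ⟪x, y⟫ := rfl

lemma continuous_inner : Continuous (fun x : E × E => ⟪x.1, x.2⟫) := by
  have hlip : ∀ p q : E × E,
      ‖⟪p.1, p.2⟫ - ⟪q.1, q.2⟫‖ ≤ ‖p.1 - q.1‖ * ‖p.2‖ + ‖q.1‖ * ‖p.2 - q.2‖ :=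
    fun p q => by
      have e : ⟪p.1, p.2⟫ - ⟪q.1, q.2⟫ = ⟪p.1 - q.1, p.2⟫ + ⟪q.1, p.2 - q.2⟫ := by
        rw [inner_sub_left, inner_sub_right]; abel
      rw [e]
      exact (norm_add_le _ _).trans (add_le_add (norm_inner_le E) (norm_inner_le E))
  rw [Metric.continuous_iff]
  intro q ε hε
  have hpos : 0 < ‖q.1‖ + ‖q.2‖ + 1 := by positivity
  refine ⟨min 1 (ε / (2 * (‖q.1‖ + ‖q.2‖ + 1))), by positivity, fun p hp => ?_⟩
  rw [dist_eq_norm] at hp ⊢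
  set δ := min 1 (ε / (2 * (‖q.1‖ + ‖q.2‖ + 1))) with hδ
  have hδ1 : δ ≤ 1 := min_le_left _ _
  have hδ2 : δ ≤ ε / (2 * (‖q.1‖ + ‖q.2‖ + 1)) := min_le_right _ _
  have h1 : ‖p.1 - q.1‖ ≤ ‖p - q‖ := norm_fst_le (p - q)
  have h2 : ‖p.2 - q.2‖ ≤ ‖p - q‖ := norm_snd_le (p - q)
  have hp2 : ‖p.2‖ ≤ ‖q.2‖ + 1 := by
    have := norm_le_insert' p.2 q.2
    linarith
  have key : δ * (2 * (‖q.1‖ + ‖q.2‖ + 1)) ≤ ε := (le_div_iff₀ (by positivity)).mp hδ2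
  calc ‖⟪p.1, p.2⟫ - ⟪q.1, q.2⟫‖ ≤ ‖p.1 - q.1‖ * ‖p.2‖ + ‖q.1‖ * ‖p.2 - q.2‖ := hlip p q
    _ ≤ ‖p - q‖ * (‖q.2‖ + 1) + ‖q.1‖ * ‖p - q‖ := by gcongr
    _ < ε := by nlinarith [norm_nonneg q.1, norm_nonneg q.2, norm_nonneg (p - q)]

end CStarModuleRight

namespace FrameAux

variable {A E : Type*} [CStarCoeff E A] [NonUnitalCStarAlgebra A] [PartialOrder A] [StarOrderedRing A]
  [NormedAddCommGroup E] [NormedSpace ℂ E] [SMul Aᵐᵒᵖ E] [CStarModuleRight A E]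

local notation "⟪" x ", " y "⟫" => inner (𝕜 := A) x y

lemma ext_inner_left {x y : E} (h : ∀ z : E, ⟪z, x⟫ = ⟪z, y⟫) : x = y := by
  have h2 : ⟪x - y, x - y⟫ = 0 := by
    rw [CStarModuleRight.inner_sub_right, h (x - y), sub_self]
  rwa [CStarModuleRight.inner_self, sub_eq_zero] at h2

lemma op_smul_add (x : E) (a b : A) : x <• (a + b) = x <• a + x <• b := by
  refine ext_inner_left fun z => ?_
  rw [CStarModuleRight.inner_add_right, CStarModuleRight.inner_op_smul_right,
    CStarModuleRight.inner_op_smul_right, CStarModuleRight.inner_op_smul_right, mul_add]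

lemma op_smul_csmul (x : E) (c : ℂ) (a : A) : x <• (c • a) = c • (x <• a) := by
  refine ext_inner_left fun z => ?_
  rw [CStarModuleRight.inner_op_smul_right, CStarModuleRight.inner_smul_right_complex,
    CStarModuleRight.inner_op_smul_right, mul_smul_comm]

lemma norm_op_smul_le (x : E) (a : A) : ‖x <• a‖ ≤ ‖x‖ * ‖a‖ := by
  have h1 : ‖x <• a‖ ^ 2 = ‖star a * ⟪x, x⟫ * a‖ := by
    rw [CStarModuleRight.norm_sq_eq]
    congr 1
    rw [CStarModuleRight.inner_op_smul_right, CStarModuleRight.inner_op_smul_left, mul_assoc]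
  have h3 : ‖x <• a‖ ^ 2 ≤ (‖x‖ * ‖a‖) ^ 2 := by
    rw [h1]
    calc ‖star a * ⟪x, x⟫ * a‖ ≤ ‖star a * ⟪x, x⟫‖ * ‖a‖ := norm_mul_le _ _
      _ ≤ ‖star a‖ * ‖⟪x, x⟫‖ * ‖a‖ := by gcongr; exact norm_mul_le _ _
      _ = ‖a‖ * (‖x‖ ^ 2) * ‖a‖ := by rw [norm_star, CStarModuleRight.norm_sq_eq]
      _ = (‖x‖ * ‖a‖) ^ 2 := by ring
  exact (pow_le_pow_iff_left₀ (norm_nonneg _) (by positivity) (by norm_num)).mp h3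

/-- Right scalar multiplication as a continuous linear map. -/
noncomputable def opSmulCLM (x : E) : A →L[ℂ] E :=
  LinearMap.mkContinuous
    { toFun := fun a => x <• a
      map_add' := op_smul_add x
      map_smul' := op_smul_csmul x } ‖x‖ (fun a => norm_op_smul_le x a)

@[simp] lemma opSmulCLM_apply (x : E) (a : A) : opSmulCLM x a = x <• a := rfl

end FrameAux

namespace FrameAux

variable {A E : Type*} [CStarCoeff E A] [NonUnitalCStarAlgebra A] [PartialOrder A] [StarOrderedRing A]
  [NormedAddCommGroup E] [NormedSpace ℂ E] [SMul Aᵐᵒᵖ E] [CStarModuleRight A E]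

local notation "⟪" x ", " y "⟫" => inner (𝕜 := A) x y

/-- The predicate that `S` is an adjoint of `T`. -/
def IsAdjointOf [CStarCoeff E A] (S T : E →L[ℂ] E) : Prop := ∀ x y : E, ⟪S x, y⟫ = ⟪x, T y⟫

variable (A E) in
/-- The subalgebra of adjointable operators on a Hilbert C⋆-module. -/
def adjointableAlg : Subalgebra ℂ (E →L[ℂ] E) where
  carrier := {T | ∃ S, IsAdjointOf S T}
  mul_mem' := by
    rintro T U ⟨S, hS⟩ ⟨V, hV⟩
    exact ⟨V.comp S, fun x y => by
      simp only [ContinuousLinearMap.comp_apply, ContinuousLinearMap.mul_apply]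
      rw [hV, hS]⟩
  add_mem' := by
    rintro T U ⟨S, hS⟩ ⟨V, hV⟩
    exact ⟨S + V, fun x y => by
      simp only [ContinuousLinearMap.add_apply, CStarModuleRight.inner_add_left,
        CStarModuleRight.inner_add_right]
      rw [hS, hV]⟩
  algebraMap_mem' := by
    intro c
    refine ⟨(starRingEnd ℂ c) • 1, fun x y => ?_⟩
    simp only [ContinuousLinearMap.smul_apply, ContinuousLinearMap.one_apply,
      Algebra.algebraMap_eq_smul_one, CStarModuleRight.inner_smul_left_complex,
      CStarModuleRight.inner_smul_right_complex, RCLike.star_def, starRingEnd_self_apply]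

end FrameAux

namespace FrameAux

variable {A E : Type*} [CStarCoeff E A] [NonUnitalCStarAlgebra A] [PartialOrder A] [StarOrderedRing A]
  [NormedAddCommGroup E] [NormedSpace ℂ E] [SMul Aᵐᵒᵖ E] [CStarModuleRight A E]

local notation "⟪" x ", " y "⟫" => inner (𝕜 := A) x y

lemma ext_inner_right {x y : E} (h : ∀ z : E, ⟪x, z⟫ = ⟪y, z⟫) : x = y := by
  apply FrameAux.ext_inner_left
  intro z
  rw [← CStarModuleRight.star_inner x, ← CStarModuleRight.star_inner y, h z]

lemma IsAdjointOf.flip {S T : E →L[ℂ] E} (h : IsAdjointOf S T) : IsAdjointOf T S := by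
  intro x y
  rw [← CStarModuleRight.star_inner y, ← h, CStarModuleRight.star_inner]

lemma IsAdjointOf.unique {S₁ S₂ T : E →L[ℂ] E} (h₁ : IsAdjointOf S₁ T)
    (h₂ : IsAdjointOf S₂ T) : S₁ = S₂ := by
  ext x
  refine ext_inner_right fun z => ?_
  rw [h₁, h₂]

lemma IsAdjointOf.norm_le {S T : E →L[ℂ] E} (h : IsAdjointOf S T) : ‖S‖ ≤ ‖T‖ := by
  refine ContinuousLinearMap.opNorm_le_bound _ (norm_nonneg T) fun x => ?_
  rcases eq_or_lt_of_le (norm_nonneg (S x)) with h0 | h0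
  · rw [← h0]; positivity
  · have key : ‖S x‖ ^ 2 ≤ ‖T‖ * ‖x‖ * ‖S x‖ := by
      calc ‖S x‖ ^ 2 = ‖⟪S x, S x⟫‖ := CStarModuleRight.norm_sq_eq
        _ = ‖⟪x, T (S x)⟫‖ := by rw [h]
        _ ≤ ‖x‖ * ‖T (S x)‖ := CStarModuleRight.norm_inner_le E
        _ ≤ ‖x‖ * (‖T‖ * ‖S x‖) := by gcongr; exact T.le_opNorm _
        _ = ‖T‖ * ‖x‖ * ‖S x‖ := by ring
    have h2 : ‖S x‖ * ‖S x‖ ≤ ‖T‖ * ‖x‖ * ‖S x‖ := by nlinarith [key]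
    exact le_of_mul_le_mul_right h2 h0

lemma isClosed_adjointableAlg [CompleteSpace E] :
    IsClosed ((adjointableAlg A E : Set (E →L[ℂ] E))) := by
  refine IsSeqClosed.isClosed fun T T₀ hmem hT => ?_
  choose S hS using hmem
  have hcau : CauchySeq S := by
    have hc : CauchySeq T := hT.cauchySeq
    rw [Metric.cauchySeq_iff] at hc ⊢
    intro ε hε
    obtain ⟨N, hN⟩ := hc ε hε
    refine ⟨N, fun m hm n hn => ?_⟩
    have h1 : IsAdjointOf (S m - S n) (T m - T n) := by
      intro x y
      simp only [ContinuousLinearMap.sub_apply, CStarModuleRight.inner_sub_left,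
        CStarModuleRight.inner_sub_right]
      rw [hS m, hS n]
    calc dist (S m) (S n) = ‖S m - S n‖ := dist_eq_norm _ _
      _ ≤ ‖T m - T n‖ := h1.norm_le
      _ = dist (T m) (T n) := (dist_eq_norm _ _).symm
      _ < ε := hN m hm n hn
  obtain ⟨S₀, hS₀⟩ := cauchySeq_tendsto_of_complete hcau
  refine ⟨S₀, fun x y => ?_⟩
  have h1 : Filter.Tendsto (fun n => ⟪S n x, y⟫) Filter.atTop (nhds ⟪S₀ x, y⟫) := by
    have hx : Filter.Tendsto (fun n => ((S n x : E), y)) Filter.atTop (nhds (S₀ x, y)) := by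
      refine Filter.Tendsto.prodMk_nhds ?_ tendsto_const_nhds
      exact (ContinuousLinearMap.apply ℂ E x).continuous.tendsto _ |>.comp hS₀
    exact (CStarModuleRight.continuous_inner.tendsto _).comp hx
  have h2 : Filter.Tendsto (fun n => ⟪x, T n y⟫) Filter.atTop (nhds ⟪x, T₀ y⟫) := by
    have hy : Filter.Tendsto (fun n => (x, (T n y : E))) Filter.atTop (nhds (x, T₀ y)) := by
      refine Filter.Tendsto.prodMk_nhds tendsto_const_nhds ?_
      exact (ContinuousLinearMap.apply ℂ E y).continuous.tendsto _ |>.comp hT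
    exact (CStarModuleRight.continuous_inner.tendsto _).comp hy
  have : (fun n => ⟪S n x, y⟫) = fun n => ⟪x, T n y⟫ := funext fun n => hS n x y
  rw [this] at h1
  exact tendsto_nhds_unique h1 h2

variable [CompleteSpace E]

instance : CompleteSpace ↥(adjointableAlg A E) :=
  isClosed_adjointableAlg.completeSpace_coe

end FrameAux
namespace FrameAux

variable {A E : Type*} [CStarCoeff E A] [NonUnitalCStarAlgebra A] [PartialOrder A] [StarOrderedRing A]
  [NormedAddCommGroup E] [NormedSpace ℂ E] [SMul Aᵐᵒᵖ E] [CStarModuleRight A E]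

local notation "⟪" x ", " y "⟫" => inner (𝕜 := A) x y

lemma mem_adjointableAlg_iff {T : E →L[ℂ] E} :
    T ∈ adjointableAlg A E ↔ ∃ S, IsAdjointOf S T := Iff.rfl

noncomputable instance : Star ↥(adjointableAlg A E) where
  star T := ⟨(mem_adjointableAlg_iff.mp T.2).choose,
    mem_adjointableAlg_iff.mpr ⟨T.1, (mem_adjointableAlg_iff.mp T.2).choose_spec.flip⟩⟩

lemma star_isAdjointOf (T : ↥(adjointableAlg A E)) :
    IsAdjointOf (↑(star T) : E →L[ℂ] E) (↑T : E →L[ℂ] E) :=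
  (mem_adjointableAlg_iff.mp T.2).choose_spec

lemma inner_star_left (T : ↥(adjointableAlg A E)) (x y : E) :
    ⟪(↑(star T) : E →L[ℂ] E) x, y⟫ = ⟪x, (↑T : E →L[ℂ] E) y⟫ :=
  star_isAdjointOf T x y

lemma inner_star_right (T : ↥(adjointableAlg A E)) (x y : E) :
    ⟪x, (↑(star T) : E →L[ℂ] E) y⟫ = ⟪(↑T : E →L[ℂ] E) x, y⟫ :=
  ((star_isAdjointOf T).flip x y).symm

lemma star_val_eq {T : ↥(adjointableAlg A E)} {S : E →L[ℂ] E}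
    (h : IsAdjointOf S (↑T : E →L[ℂ] E)) : (↑(star T) : E →L[ℂ] E) = S :=
  (star_isAdjointOf T).unique h

noncomputable instance : StarRing ↥(adjointableAlg A E) where
  star_involutive T := Subtype.ext (star_val_eq (T := star T) (star_isAdjointOf T).flip)
  star_mul T U := by
    refine Subtype.ext ?_
    refine star_val_eq fun x y => ?_
    show ⟪((↑(star U) : E →L[ℂ] E) * ↑(star T)) x, y⟫ = ⟪x, (↑(T * U) : E →L[ℂ] E) y⟫
    rw [ContinuousLinearMap.mul_apply, inner_star_left U, inner_star_left T,
      Subalgebra.coe_mul, ContinuousLinearMap.mul_apply]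
  star_add T U := by
    refine Subtype.ext ?_
    refine star_val_eq fun x y => ?_
    show ⟪((↑(star T) : E →L[ℂ] E) + ↑(star U)) x, y⟫ = ⟪x, (↑(T + U) : E →L[ℂ] E) y⟫
    rw [Subalgebra.coe_add, ContinuousLinearMap.add_apply, ContinuousLinearMap.add_apply,
      CStarModuleRight.inner_add_left, CStarModuleRight.inner_add_right,
      inner_star_left T, inner_star_left U]

noncomputable instance : StarModule ℂ ↥(adjointableAlg A E) where
  star_smul c T := by
    refine Subtype.ext ?_
    refine star_val_eq fun x y => ?_
    show ⟪((starRingEnd ℂ) c • (↑(star T) : E →L[ℂ] E)) x, y⟫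
        = ⟪x, (↑(c • T) : E →L[ℂ] E) y⟫
    rw [ContinuousLinearMap.smul_apply, CStarModuleRight.inner_smul_left_complex,
      RCLike.star_def, starRingEnd_self_apply, inner_star_left T,
      ← CStarModuleRight.inner_smul_right_complex]
    rfl

lemma norm_star_val (T : ↥(adjointableAlg A E)) :
    ‖(↑(star T) : E →L[ℂ] E)‖ = ‖(↑T : E →L[ℂ] E)‖ :=
  le_antisymm (star_isAdjointOf T).norm_le (star_isAdjointOf T).flip.norm_le

noncomputable instance : CStarRing ↥(adjointableAlg A E) where
  norm_mul_self_le T := by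
    have key : ∀ x : E, ‖(↑T : E →L[ℂ] E) x‖ ^ 2 ≤ ‖star T * T‖ * ‖x‖ ^ 2 := fun x => by
      calc ‖(↑T : E →L[ℂ] E) x‖ ^ 2 = ‖⟪(↑T : E →L[ℂ] E) x, (↑T : E →L[ℂ] E) x⟫‖ :=
            CStarModuleRight.norm_sq_eq
        _ = ‖⟪x, (↑(star T) : E →L[ℂ] E) ((↑T : E →L[ℂ] E) x)⟫‖ := by
            rw [inner_star_right]
        _ = ‖⟪x, (↑(star T * T) : E →L[ℂ] E) x⟫‖ := by
            rw [Subalgebra.coe_mul, ContinuousLinearMap.mul_apply]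
        _ ≤ ‖x‖ * ‖(↑(star T * T) : E →L[ℂ] E) x‖ := CStarModuleRight.norm_inner_le E
        _ ≤ ‖x‖ * (‖(↑(star T * T) : E →L[ℂ] E)‖ * ‖x‖) := by
            gcongr; exact (↑(star T * T) : E →L[ℂ] E).le_opNorm x
        _ = ‖star T * T‖ * ‖x‖ ^ 2 := by rw [show ‖(↑(star T * T) : E →L[ℂ] E)‖ = ‖star T * T‖ from rfl]; ring
    have hb : ‖(↑T : E →L[ℂ] E)‖ ≤ Real.sqrt ‖star T * T‖ := by
      refine ContinuousLinearMap.opNorm_le_bound _ (Real.sqrt_nonneg _) fun x => ?_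
      have hx : ‖(↑T : E →L[ℂ] E) x‖ ^ 2 ≤ (Real.sqrt ‖star T * T‖ * ‖x‖) ^ 2 := by
        rw [mul_pow, Real.sq_sqrt (norm_nonneg (star T * T))]
        exact key x
      exact (pow_le_pow_iff_left₀ (norm_nonneg _) (by positivity) (by norm_num)).mp hx
    calc ‖T‖ * ‖T‖ = ‖(↑T : E →L[ℂ] E)‖ ^ 2 := by rw [pow_two]; rfl
      _ ≤ (Real.sqrt ‖star T * T‖) ^ 2 := by gcongr
      _ = ‖star T * T‖ := Real.sq_sqrt (norm_nonneg _)

end FrameAux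

namespace FrameAux
variable {A E : Type*} [CStarCoeff E A] [NonUnitalCStarAlgebra A] [PartialOrder A] [StarOrderedRing A]
  [NormedAddCommGroup E] [NormedSpace ℂ E] [SMul Aᵐᵒᵖ E] [CStarModuleRight A E] [CompleteSpace E]

noncomputable instance : CStarAlgebra ↥(adjointableAlg A E) := { }

end FrameAux
namespace FrameAux

variable {A E : Type*} [CStarCoeff E A] [NonUnitalCStarAlgebra A] [PartialOrder A] [StarOrderedRing A]
  [NormedAddCommGroup E] [NormedSpace ℂ E] [SMul Aᵐᵒᵖ E] [CStarModuleRight A E]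

local notation "⟪" x ", " y "⟫" => inner (𝕜 := A) x y

section frameOp

variable {k : ℕ} (η : Fin k → E)

/-- The frame operator as a continuous linear map. -/
noncomputable def frameOpCLM [CStarCoeff E A] : E →L[ℂ] E :=
  ∑ j, (opSmulCLM (η j)).comp (CStarModuleRight.innerSL (η j))

lemma frameOpCLM_apply (x : E) : frameOpCLM η x = ∑ j, η j <• ⟪η j, x⟫ := by
  simp [frameOpCLM, ContinuousLinearMap.sum_apply, CStarModuleRight.innerSL_apply]

lemma inner_frameOpCLM (x y : E) :
    ⟪x, frameOpCLM η y⟫ = ∑ j, ⟪x, η j⟫ * ⟪η j, y⟫ := by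
  rw [frameOpCLM_apply]
  rw [CStarModuleRight.inner_sum_right]
  exact Finset.sum_congr rfl fun j _ => CStarModuleRight.inner_op_smul_right

lemma frameOpCLM_isAdjointOf : IsAdjointOf (frameOpCLM η) (frameOpCLM η) := by
  intro x y
  rw [← CStarModuleRight.star_inner y, inner_frameOpCLM, inner_frameOpCLM, star_sum]
  refine Finset.sum_congr rfl fun j _ => ?_
  rw [star_mul, CStarModuleRight.star_inner, CStarModuleRight.star_inner]

variable [CompleteSpace E]

/-- The frame operator as an element of the adjointable operators. -/
noncomputable def frameOp : ↥(adjointableAlg A E) :=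
  ⟨frameOpCLM η, mem_adjointableAlg_iff.mpr ⟨frameOpCLM η, frameOpCLM_isAdjointOf η⟩⟩

lemma frameOp_val : (↑(frameOp η) : E →L[ℂ] E) = frameOpCLM η := rfl

lemma frameOp_isSelfAdjoint : IsSelfAdjoint (frameOp η) :=
  Subtype.ext (star_val_eq (frameOpCLM_isAdjointOf η))

lemma inner_frameOp_self (x : E) :
    ⟪x, (↑(frameOp η) : E →L[ℂ] E) x⟫ = ∑ j, ⟪x, η j⟫ * ⟪η j, x⟫ :=
  inner_frameOpCLM η x x

lemma inner_frameOp_self_nonneg (x : E) :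
    0 ≤ ⟪x, (↑(frameOp η) : E →L[ℂ] E) x⟫ := by
  rw [inner_frameOp_self]
  refine Finset.sum_nonneg fun j _ => ?_
  rw [← CStarModuleRight.star_inner (η j) x]
  exact star_mul_self_nonneg _

end frameOp

section spectral

variable [CompleteSpace E]

lemma val_algebraMap_real (c : ℝ) (x : E) :
    (↑(algebraMap ℝ ↥(adjointableAlg A E) c) : E →L[ℂ] E) x = c • x := by
  have h : algebraMap ℝ ↥(adjointableAlg A E) c
      = algebraMap ℂ ↥(adjointableAlg A E) ((c : ℂ)) := by
    rw [IsScalarTower.algebraMap_apply ℝ ℂ ↥(adjointableAlg A E) c]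
    norm_num
  rw [h]
  rw [show ((algebraMap ℂ ↥(adjointableAlg A E) ((c : ℂ)) : ↥(adjointableAlg A E)) : E →L[ℂ] E)
      = algebraMap ℂ (E →L[ℂ] E) ((c : ℂ)) from rfl]
  rw [Algebra.algebraMap_eq_smul_one, ContinuousLinearMap.smul_apply,
    ContinuousLinearMap.one_apply, Complex.coe_smul]

lemma exists_approx_eigenvector [Nontrivial E] (T : ↥(adjointableAlg A E))
    (hsa : IsSelfAdjoint T) {l : ℝ} (hl : l ∈ spectrum ℝ T) {ε : ℝ} (hε : 0 < ε) :
    ∃ ζ : E, ζ ≠ 0 ∧ ‖(↑T : E →L[ℂ] E) ζ - l • ζ‖ ≤ ε * ‖ζ‖ := by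
  haveI : NormOneClass ↥(adjointableAlg A E) := ⟨ContinuousLinearMap.norm_id⟩
  set δ : ℝ := ε / 2 with hδ
  have hδ0 : 0 < δ := by positivity
  set f : ℝ → ℝ := fun t => max 0 (1 - |t - l| / δ) with hf
  have hfc : Continuous f := by fun_prop
  have hfl : f l = 1 := by simp [hf]
  have hf1 : ∀ t, f t ≤ 1 := fun t => by
    simp only [hf, max_le_iff]
    constructor
    · norm_num
    · have : 0 ≤ |t - l| / δ := by positivity
      linarith
  have hf0 : ∀ t, 0 ≤ f t := fun t => le_max_left _ _
  set B := cfc f T with hB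
  -- ‖B‖ ≥ 1
  have hBnorm : (1 : ℝ) ≤ ‖B‖ := by
    have hmem : (1 : ℝ) ∈ spectrum ℝ B := by
      rw [hB, cfc_map_spectrum f T hsa hfc.continuousOn]
      exact ⟨l, hl, hfl⟩
    have h := spectrum.norm_le_norm_of_mem (𝕜 := ℝ) hmem
    rw [Real.norm_eq_abs, abs_one] at h
    exact h
  -- the product estimate
  set g : ℝ → ℝ := fun t => (t - l) * f t with hg
  have hgb : ∀ t, |g t| ≤ δ := fun t => by
    rcases le_or_gt |t - l| δ with h | h
    · calc |g t| = |t - l| * |f t| := abs_mul _ _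
        _ ≤ δ * 1 := by
            refine mul_le_mul h ?_ (abs_nonneg _) hδ0.le
            rw [abs_of_nonneg (hf0 t)]; exact hf1 t
        _ = δ := mul_one δ
    · have hft : f t = 0 := by
        simp only [hf, max_eq_left_iff]
        have h2 : 1 ≤ |t - l| / δ := (one_le_div hδ0).mpr h.le
        linarith
      simp [hg, hft, hδ0.le]
  have hgT : cfc g T = (T - algebraMap ℝ ↥(adjointableAlg A E) l) * B := by
    rw [hg, hB]
    rw [cfc_mul (fun t => t - l) f T (by fun_prop) hfc.continuousOn]
    congr 1
    rw [cfc_sub (fun t : ℝ => t) (fun _ => l) T (by fun_prop) (by fun_prop)]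
    rw [cfc_id' ℝ T hsa, cfc_const l T hsa]
  have hgnorm : ‖cfc g T‖ ≤ δ :=
    norm_cfc_le hδ0.le fun t _ => by simpa using hgb t
  -- choose a good vector
  have hnotall : ¬ ∀ x : E, ‖(↑B : E →L[ℂ] E) x‖ ≤ (1/2) * ‖x‖ := by
    intro hall
    have : ‖(↑B : E →L[ℂ] E)‖ ≤ 1/2 :=
      ContinuousLinearMap.opNorm_le_bound _ (by norm_num) hall
    have : ‖B‖ ≤ 1/2 := this
    linarith
  push_neg at hnotall
  obtain ⟨x, hx⟩ := hnotall
  set ζ := (↑B : E →L[ℂ] E) x with hζ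
  have hζpos : (1/2) * ‖x‖ < ‖ζ‖ := hx
  have hζne : ζ ≠ 0 := by
    intro h0
    rw [h0] at hζpos
    simp only [norm_zero] at hζpos
    have : ‖x‖ ≥ 0 := norm_nonneg x
    linarith
  refine ⟨ζ, hζne, ?_⟩
  have hx2ζ : ‖x‖ ≤ 2 * ‖ζ‖ := by linarith
  have key : (↑T : E →L[ℂ] E) ζ - l • ζ = (↑(cfc g T) : E →L[ℂ] E) x := by
    rw [hgT, Subalgebra.coe_mul, ContinuousLinearMap.mul_apply, ← hζ]
    rw [show ((↑(T - algebraMap ℝ ↥(adjointableAlg A E) l) : E →L[ℂ] E))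
        = (↑T : E →L[ℂ] E) - ↑(algebraMap ℝ ↥(adjointableAlg A E) l) from rfl]
    rw [ContinuousLinearMap.sub_apply, val_algebraMap_real]
  rw [key]
  calc ‖(↑(cfc g T) : E →L[ℂ] E) x‖ ≤ ‖(↑(cfc g T) : E →L[ℂ] E)‖ * ‖x‖ :=
        ContinuousLinearMap.le_opNorm _ _
    _ ≤ δ * (2 * ‖ζ‖) := by
        refine mul_le_mul hgnorm hx2ζ (norm_nonneg x) hδ0.le
    _ = ε * ‖ζ‖ := by rw [hδ]; ring

end spectral

end FrameAux
namespace FrameAux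

variable {A E : Type*} [CStarCoeff E A] [NonUnitalCStarAlgebra A] [PartialOrder A] [StarOrderedRing A]
  [NormedAddCommGroup E] [NormedSpace ℂ E] [SMul Aᵐᵒᵖ E] [CStarModuleRight A E] [CompleteSpace E]

local notation "⟪" x ", " y "⟫" => inner (𝕜 := A) x y

lemma spectrum_lower_bound [Nontrivial E] (T : ↥(adjointableAlg A E))
    (hsa : IsSelfAdjoint T) (hpos : ∀ ξ : E, 0 ≤ ⟪ξ, (↑T : E →L[ℂ] E) ξ⟫) {c : ℝ}
    (hlow : ∀ ξ : E, c * ‖ξ‖ ^ 2 ≤ ‖⟪ξ, (↑T : E →L[ℂ] E) ξ⟫‖) :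
    ∀ l ∈ spectrum ℝ T, c ≤ l := by
  intro l hl
  by_contra hcl
  push_neg at hcl
  -- inner product estimate for an approximate eigenvector
  have inner_est : ∀ {ε : ℝ}, 0 < ε → ∃ ζ : E, ζ ≠ 0 ∧
      ‖⟪ζ, (↑T : E →L[ℂ] E) ζ⟫ - l • ⟪ζ, ζ⟫‖ ≤ ε * ‖ζ‖ ^ 2 := by
    intro ε hε
    obtain ⟨ζ, hζne, hζ⟩ := exists_approx_eigenvector T hsa hl hε
    refine ⟨ζ, hζne, ?_⟩
    have h1 : ⟪ζ, (↑T : E →L[ℂ] E) ζ⟫ - l • ⟪ζ, ζ⟫ = ⟪ζ, (↑T : E →L[ℂ] E) ζ - l • ζ⟫ := by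
      rw [CStarModuleRight.inner_sub_right, CStarModuleRight.inner_smul_right_real]
    rw [h1]
    calc ‖⟪ζ, (↑T : E →L[ℂ] E) ζ - l • ζ⟫‖ ≤ ‖ζ‖ * ‖(↑T : E →L[ℂ] E) ζ - l • ζ‖ :=
          CStarModuleRight.norm_inner_le E
      _ ≤ ‖ζ‖ * (ε * ‖ζ‖) := by gcongr
      _ = ε * ‖ζ‖ ^ 2 := by ring
  rcases lt_or_ge l 0 with hneg | hpos'
  · -- negative spectrum is impossible
    obtain ⟨ζ, hζne, hζ⟩ := inner_est (ε := -l/2) (by linarith)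
    have hζpos : 0 < ‖ζ‖ ^ 2 := pow_pos (norm_pos_iff.mpr hζne) 2
    have hkey : (-l) * ‖ζ‖ ^ 2 ≤ ‖⟪ζ, (↑T : E →L[ℂ] E) ζ⟫ - l • ⟪ζ, ζ⟫‖ := by
      have e1 : ⟪ζ, (↑T : E →L[ℂ] E) ζ⟫ - l • ⟪ζ, ζ⟫
          = ⟪ζ, (↑T : E →L[ℂ] E) ζ⟫ + (-l) • ⟪ζ, ζ⟫ := by
        rw [sub_eq_add_neg, ← neg_smul]
      have e2 : (0 : A) ≤ (-l) • ⟪ζ, ζ⟫ :=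
        smul_nonneg (by linarith) CStarModuleRight.inner_self_nonneg
      have e3 : (-l) • ⟪ζ, ζ⟫ ≤ ⟪ζ, (↑T : E →L[ℂ] E) ζ⟫ + (-l) • ⟪ζ, ζ⟫ :=
        le_add_of_nonneg_left (hpos ζ)
      calc (-l) * ‖ζ‖ ^ 2 = ‖(-l) • ⟪ζ, ζ⟫‖ := by
            rw [norm_smul, Real.norm_eq_abs, abs_of_nonneg (by linarith : (0:ℝ) ≤ -l),
              ← CStarModuleRight.norm_sq_eq]
        _ ≤ ‖⟪ζ, (↑T : E →L[ℂ] E) ζ⟫ + (-l) • ⟪ζ, ζ⟫‖ :=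
            CStarAlgebra.norm_le_norm_of_nonneg_of_le e2 e3
        _ = ‖⟪ζ, (↑T : E →L[ℂ] E) ζ⟫ - l • ⟪ζ, ζ⟫‖ := by rw [e1]
    have : (-l) * ‖ζ‖ ^ 2 ≤ (-l/2) * ‖ζ‖ ^ 2 := hkey.trans hζ
    nlinarith
  · -- 0 ≤ l < c
    obtain ⟨ζ, hζne, hζ⟩ := inner_est (ε := (c - l)/2) (by linarith)
    have hζpos : 0 < ‖ζ‖ ^ 2 := pow_pos (norm_pos_iff.mpr hζne) 2
    have h2 : ‖⟪ζ, (↑T : E →L[ℂ] E) ζ⟫‖ ≤ (c - l)/2 * ‖ζ‖ ^ 2 + l * ‖ζ‖ ^ 2 := by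
      calc ‖⟪ζ, (↑T : E →L[ℂ] E) ζ⟫‖
          ≤ ‖⟪ζ, (↑T : E →L[ℂ] E) ζ⟫ - l • ⟪ζ, ζ⟫‖ + ‖l • ⟪ζ, ζ⟫‖ := by
            have := norm_sub_norm_le (⟪ζ, (↑T : E →L[ℂ] E) ζ⟫ - l • ⟪ζ, ζ⟫ + l • ⟪ζ, ζ⟫) (l • ⟪ζ, ζ⟫)
            calc ‖⟪ζ, (↑T : E →L[ℂ] E) ζ⟫‖
                = ‖(⟪ζ, (↑T : E →L[ℂ] E) ζ⟫ - l • ⟪ζ, ζ⟫) + l • ⟪ζ, ζ⟫‖ := by rw [sub_add_cancel]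
              _ ≤ ‖⟪ζ, (↑T : E →L[ℂ] E) ζ⟫ - l • ⟪ζ, ζ⟫‖ + ‖l • ⟪ζ, ζ⟫‖ := norm_add_le _ _
        _ ≤ (c - l)/2 * ‖ζ‖ ^ 2 + l * ‖ζ‖ ^ 2 := by
            refine add_le_add hζ (le_of_eq ?_)
            rw [norm_smul, Real.norm_eq_abs, abs_of_nonneg hpos', ← CStarModuleRight.norm_sq_eq]
    have h3 := hlow ζ
    nlinarith
  
lemma coercive_of_spectrum_lower (T : ↥(adjointableAlg A E)) (hsa : IsSelfAdjoint T)
    {c : ℝ} (hspec : ∀ l ∈ spectrum ℝ T, c ≤ l) (ξ : E) :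
    c • ⟪ξ, ξ⟫ ≤ ⟪ξ, (↑T : E →L[ℂ] E) ξ⟫ := by
  set R := cfc (fun t : ℝ => Real.sqrt (t - c)) T with hR
  have hRsa : IsSelfAdjoint R := cfc_predicate _ T
  have hmul : R * R = T - algebraMap ℝ ↥(adjointableAlg A E) c := by
    rw [hR, ← cfc_mul (fun t : ℝ => Real.sqrt (t - c)) (fun t : ℝ => Real.sqrt (t - c)) T
      (by fun_prop) (by fun_prop)]
    calc cfc (fun t : ℝ => Real.sqrt (t - c) * Real.sqrt (t - c)) T
        = cfc (fun t : ℝ => t - c) T := by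
          refine cfc_congr fun t ht => ?_
          exact Real.mul_self_sqrt (sub_nonneg.mpr (hspec t ht))
      _ = T - algebraMap ℝ ↥(adjointableAlg A E) c := by
          rw [cfc_sub (fun t : ℝ => t) (fun _ => c) T (by fun_prop) (by fun_prop)]
          rw [cfc_id' ℝ T hsa, cfc_const c T hsa]
  have hTval : (↑T : E →L[ℂ] E) ξ = c • ξ + (↑R : E →L[ℂ] E) ((↑R : E →L[ℂ] E) ξ) := by
    have h1 : T = algebraMap ℝ ↥(adjointableAlg A E) c + R * R := by
      rw [hmul, add_sub_cancel]
    calc (↑T : E →L[ℂ] E) ξ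
        = (↑(algebraMap ℝ ↥(adjointableAlg A E) c + R * R) : E →L[ℂ] E) ξ := by rw [← h1]
      _ = (↑(algebraMap ℝ ↥(adjointableAlg A E) c) : E →L[ℂ] E) ξ
          + (↑(R * R) : E →L[ℂ] E) ξ := by
          rw [Subalgebra.coe_add, ContinuousLinearMap.add_apply]
      _ = c • ξ + (↑R : E →L[ℂ] E) ((↑R : E →L[ℂ] E) ξ) := by
          rw [val_algebraMap_real, Subalgebra.coe_mul, ContinuousLinearMap.mul_apply]
  rw [hTval, CStarModuleRight.inner_add_right, CStarModuleRight.inner_smul_right_real]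
  refine le_add_of_nonneg_right ?_
  have hkey := inner_star_left R ξ ((↑R : E →L[ℂ] E) ξ)
  rw [hRsa.star_eq] at hkey
  calc (0 : A) ≤ ⟪(↑R : E →L[ℂ] E) ξ, (↑R : E →L[ℂ] E) ξ⟫ := CStarModuleRight.inner_self_nonneg
    _ = ⟪ξ, (↑R : E →L[ℂ] E) ((↑R : E →L[ℂ] E) ξ)⟫ := hkey

end FrameAux
namespace FrameAux

section final
open WithCStarModule

variable {A E : Type*} [CStarCoeff E A] [NonUnitalCStarAlgebra A] [PartialOrder A] [StarOrderedRing A]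
  [NormedAddCommGroup E] [NormedSpace ℂ E] [SMul Aᵐᵒᵖ E] [CStarModuleRight A E] [CompleteSpace E]

local notation "⟪" x ", " y "⟫" => inner (𝕜 := A) x y

variable {k : ℕ} (η : Fin k → E)

/-- The synthesis map from the standard module. -/
noncomputable def piCLM : (Fin k → A) →L[ℂ] E :=
  LinearMap.mkContinuous
    { toFun := fun a => ∑ j, η j <• (a j)
      map_add' := fun a b => by
        simp only [Pi.add_apply, op_smul_add]
        rw [← Finset.sum_add_distrib]
      map_smul' := fun c a => by
        simp only [Pi.smul_apply, op_smul_csmul, RingHom.id_apply, Finset.smul_sum] }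
    (∑ j, ‖η j‖)
    (fun a => by
      calc ‖∑ j, η j <• (a j)‖ ≤ ∑ j, ‖η j <• (a j)‖ := norm_sum_le _ _
        _ ≤ ∑ j, ‖η j‖ * ‖a‖ := Finset.sum_le_sum fun j _ =>
              (norm_op_smul_le _ _).trans (mul_le_mul_of_nonneg_left
                (norm_le_pi_norm a j) (norm_nonneg _))
        _ = (∑ j, ‖η j‖) * ‖a‖ := by rw [Finset.sum_mul])

lemma piCLM_apply (a : Fin k → A) : piCLM η a = ∑ j, η j <• (a j) := rfl

/-- The core inequality: if `η` generates `E`, the frame sums are bounded below in norm. -/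
lemma core_lower_bound [Nontrivial E]
    (hGen : ∀ ξ : E, ∃ a : Fin k → A, ξ = ∑ j, η j <• a j) :
    ∃ c : ℝ, 0 < c ∧ ∀ ξ : E, c * ‖ξ‖ ^ 2 ≤ ‖∑ j, ⟪ξ, η j⟫ * ⟪η j, ξ⟫‖ := by
  have hsurj : Function.Surjective (piCLM η) := by
    intro ξ
    obtain ⟨a, ha⟩ := hGen ξ
    exact ⟨a, ha.symm⟩
  obtain ⟨M, hM0, hM⟩ := (piCLM η).exists_preimage_norm_le hsurj
  set M' : ℝ := ((k : ℝ) + 1) * M with hM'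
  have hM'0 : 0 < M' := by positivity
  refine ⟨(M' ^ 2)⁻¹, inv_pos.mpr (pow_pos hM'0 2), fun ξ => ?_⟩
  obtain ⟨a, hΦ, hanorm⟩ := hM ξ
  set u : C⋆ᵐᵒᵈ(A, Fin k → A) := (equiv A (Fin k → A)).symm (fun j => ⟪ξ, η j⟫) with hu
  set b : C⋆ᵐᵒᵈ(A, Fin k → A) := (equiv A (Fin k → A)).symm (fun j => star (a j)) with hb
  set F : A := ∑ j, ⟪ξ, η j⟫ * ⟪η j, ξ⟫ with hF
  have hu_j : ∀ j, u j = ⟪ξ, η j⟫ := fun j => by rw [hu, equiv_symm_pi_apply]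
  have hb_j : ∀ j, b j = star (a j) := fun j => by rw [hb, equiv_symm_pi_apply]
  have hub : inner (𝕜 := A) u b = ⟪ξ, ξ⟫ := by
    rw [pi_inner]
    have : ∀ j, inner (𝕜 := A) (u j) (b j) = star ⟪ξ, η j <• (a j)⟫ := fun j => by
      rw [inner_def, hu_j j, hb_j j, CStarModuleRight.inner_op_smul_right, star_mul]
    rw [Finset.sum_congr rfl fun j _ => this j, ← star_sum, ← CStarModuleRight.inner_sum_right,
      ← piCLM_apply η a, hΦ, CStarModuleRight.star_inner]
  have hbu : inner (𝕜 := A) b u = ⟪ξ, ξ⟫ := by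
    rw [← CStarModule.star_inner u, hub, CStarModuleRight.star_inner]
  have huu : inner (𝕜 := A) u u = F := by
    rw [pi_inner, hF]
    refine Finset.sum_congr rfl fun j _ => ?_
    rw [inner_def, hu_j j, CStarModuleRight.star_inner]
  have hCS := CStarModule.inner_mul_inner_swap_le (A := A) (x := b) (y := u)
  rw [hbu, hub, huu] at hCS
  -- norms
  have hxx_nonneg : (0 : A) ≤ ⟪ξ, ξ⟫ * ⟪ξ, ξ⟫ := by
    rw [show ⟪ξ, ξ⟫ * ⟪ξ, ξ⟫ = star ⟪ξ, ξ⟫ * ⟪ξ, ξ⟫ by rw [CStarModuleRight.star_inner]]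
    exact star_mul_self_nonneg _
  have h1 : ‖⟪ξ, ξ⟫‖ ^ 2 ≤ ‖b‖ ^ 2 * ‖F‖ := by
    calc ‖⟪ξ, ξ⟫‖ ^ 2 = ‖⟪ξ, ξ⟫ * ⟪ξ, ξ⟫‖ := by
          rw [show ⟪ξ, ξ⟫ * ⟪ξ, ξ⟫ = star ⟪ξ, ξ⟫ * ⟪ξ, ξ⟫ by rw [CStarModuleRight.star_inner],
            CStarRing.norm_star_mul_self, pow_two]
      _ ≤ ‖‖b‖ ^ 2 • F‖ := CStarAlgebra.norm_le_norm_of_nonneg_of_le hxx_nonneg hCS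
      _ ≤ ‖b‖ ^ 2 * ‖F‖ := by
          rw [norm_smul, Real.norm_eq_abs, abs_of_nonneg (by positivity)]
  have hξnorm : ‖⟪ξ, ξ⟫‖ = ‖ξ‖ ^ 2 := (CStarModuleRight.norm_sq_eq).symm
  rcases eq_or_ne ξ 0 with rfl | hξ0
  · simp
  · have hξpos : 0 < ‖ξ‖ := norm_pos_iff.mpr hξ0
    have h2 : ‖ξ‖ ^ 4 ≤ M' ^ 2 * ‖ξ‖ ^ 2 * ‖F‖ := by
      have ha2 : ‖b‖ ^ 2 ≤ M' ^ 2 * ‖ξ‖ ^ 2 := by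
        have hbn : ‖b‖ ≤ M' * ‖ξ‖ := by
          calc ‖b‖ ≤ ∑ j, ‖b j‖ := pi_norm_le_sum_norm b
            _ ≤ ∑ _j : Fin k, ‖a‖ := Finset.sum_le_sum fun j _ => by
                rw [hb_j j, norm_star]; exact norm_le_pi_norm a j
            _ = (k : ℝ) * ‖a‖ := by
                rw [Finset.sum_const, Finset.card_univ, Fintype.card_fin, nsmul_eq_mul]
            _ ≤ ((k : ℝ) + 1) * ‖a‖ := by nlinarith [norm_nonneg a]
            _ ≤ ((k : ℝ) + 1) * (M * ‖ξ‖) := by gcongr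
            _ = M' * ‖ξ‖ := by rw [hM']; ring
        calc ‖b‖ ^ 2 ≤ (M' * ‖ξ‖) ^ 2 := pow_le_pow_left₀ (norm_nonneg b) hbn 2
            _ = M' ^ 2 * ‖ξ‖ ^ 2 := by ring
      calc ‖ξ‖ ^ 4 = (‖ξ‖ ^ 2) ^ 2 := by ring
        _ = ‖⟪ξ, ξ⟫‖ ^ 2 := by rw [hξnorm]
        _ ≤ ‖b‖ ^ 2 * ‖F‖ := h1
        _ ≤ M' ^ 2 * ‖ξ‖ ^ 2 * ‖F‖ := by
            refine mul_le_mul_of_nonneg_right ha2 (norm_nonneg F)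
    rw [inv_mul_le_iff₀ (pow_pos hM'0 2)]
    have h5 := le_of_mul_le_mul_right (by nlinarith [h2] : ‖ξ‖ ^ 2 * ‖ξ‖ ^ 2 ≤ (M' ^ 2 * ‖F‖) * ‖ξ‖ ^ 2) (by positivity : (0:ℝ) < ‖ξ‖ ^ 2)
    exact h5

end final

end FrameAux


/-- Let `E` be a Hilbert C*-module over a C*-algebra `A` and let
`η₁, …, η_k ∈ E`.  Then there exist constants `C, D > 0` such that
`C·⟪ξ,ξ⟫ ≤ Σ_j ⟪ξ,η_j⟫·⟪η_j,ξ⟫ ≤ D·⟪ξ,ξ⟫` for all `ξ ∈ E` (i.e. `(η₁,…,η_k)` is a module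
frame for `E`) if and only if `{η₁,…,η_k}` generates `E` as an `A`-module: for every `ξ ∈ E`
there are `a₁, …, a_k ∈ A` with `ξ = Σ_j η_j · a_j`. -/
theorem finite_module_frame_iff_generating
    {A E : Type*} [NonUnitalCStarAlgebra A] [PartialOrder A] [StarOrderedRing A]
    [NormedAddCommGroup E] [NormedSpace ℂ E] [SMul Aᵐᵒᵖ E] [CStarModuleRight A E]
    [CompleteSpace E]
    (k : ℕ) (η : Fin k → E) :
    (∃ C D : ℝ, 0 < C ∧ 0 < D ∧ ∀ ξ : E,
        (C : ℂ) • (inner (𝕜 := A) ξ ξ) ≤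
          ∑ j, inner (𝕜 := A) ξ (η j) * inner (𝕜 := A) (η j) ξ ∧
        ∑ j, inner (𝕜 := A) ξ (η j) * inner (𝕜 := A) (η j) ξ ≤
          (D : ℂ) • (inner (𝕜 := A) ξ ξ)) ↔
    (∀ ξ : E, ∃ a : Fin k → A, ξ = ∑ j, η j <• a j) := by
  haveI : CStarCoeff E A := ⟨⟩
  open FrameAux in
  constructor
  · rintro ⟨C, D, hC, hD, hF⟩ ξ
    rcases subsingleton_or_nontrivial E with hE | hE
    · exact ⟨fun _ => 0, Subsingleton.elim _ _⟩
    · have hsa := frameOp_isSelfAdjoint η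
      have hpos := inner_frameOp_self_nonneg η
      have hlow : ∀ ζ : E, C * ‖ζ‖ ^ 2 ≤ ‖inner (𝕜 := A) ζ ((↑(frameOp η) : E →L[ℂ] E) ζ)‖ := by
        intro ζ
        have h1 := (hF ζ).1
        rw [Complex.coe_smul] at h1
        have h2 : C • inner (𝕜 := A) ζ ζ ≤ inner (𝕜 := A) ζ ((↑(frameOp η) : E →L[ℂ] E) ζ) := by
          rw [inner_frameOp_self]; exact h1
        calc C * ‖ζ‖ ^ 2 = ‖C • inner (𝕜 := A) ζ ζ‖ := by
              rw [norm_smul, Real.norm_eq_abs, abs_of_pos hC, CStarModuleRight.norm_sq_eq]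
          _ ≤ _ := CStarAlgebra.norm_le_norm_of_nonneg_of_le
              (smul_nonneg hC.le CStarModuleRight.inner_self_nonneg) h2
      have hspec := spectrum_lower_bound (frameOp η) hsa hpos hlow
      have hunit : IsUnit (frameOp η) := by
        by_contra hn
        have h0 : (0:ℝ) ∈ spectrum ℝ (frameOp η) := (spectrum.zero_mem_iff ℝ).mpr hn
        have := hspec 0 h0
        linarith
      obtain ⟨u, hu⟩ := hunit
      set V : ↥(adjointableAlg A E) := ↑u⁻¹ with hV
      refine ⟨fun j => inner (𝕜 := A) (η j) ((↑V : E →L[ℂ] E) ξ), ?_⟩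
      have h1 : frameOp η * V = 1 := by rw [hV, ← hu]; exact u.mul_inv
      calc ξ = ((1 : ↥(adjointableAlg A E)) : E →L[ℂ] E) ξ := rfl
        _ = ((frameOp η * V : ↥(adjointableAlg A E)) : E →L[ℂ] E) ξ := by rw [h1]
        _ = (↑(frameOp η) : E →L[ℂ] E) ((↑V : E →L[ℂ] E) ξ) := by
            rw [Subalgebra.coe_mul, ContinuousLinearMap.mul_apply]
        _ = ∑ j, η j <• inner (𝕜 := A) (η j) ((↑V : E →L[ℂ] E) ξ) := by
            rw [frameOp_val, frameOpCLM_apply]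
  · intro hGen
    have upper : ∀ ξ : E, ∑ j, inner (𝕜 := A) ξ (η j) * inner (𝕜 := A) (η j) ξ ≤
        (((∑ j, ‖η j‖ ^ 2) + 1 : ℝ) : ℂ) • inner (𝕜 := A) ξ ξ := by
      intro ξ
      rw [Complex.coe_smul]
      calc ∑ j, inner (𝕜 := A) ξ (η j) * inner (𝕜 := A) (η j) ξ
          ≤ ∑ j, ‖η j‖ ^ 2 • inner (𝕜 := A) ξ ξ :=
            Finset.sum_le_sum fun j _ => CStarModuleRight.inner_mul_inner_swap_le
        _ = (∑ j, ‖η j‖ ^ 2) • inner (𝕜 := A) ξ ξ := (Finset.sum_smul).symm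
        _ ≤ ((∑ j, ‖η j‖ ^ 2) + 1) • inner (𝕜 := A) ξ ξ :=
            smul_le_smul_of_nonneg_right (le_add_of_nonneg_right zero_le_one)
              CStarModuleRight.inner_self_nonneg
    rcases subsingleton_or_nontrivial E with hE | hE
    · refine ⟨1, 1, one_pos, one_pos, fun ξ => ?_⟩
      have hξ : ξ = (0 : E) := Subsingleton.elim _ _
      subst hξ
      have h0 : ∀ x y : E, inner (𝕜 := A) x y = 0 := fun x y => by
        rw [Subsingleton.elim x 0, Subsingleton.elim y 0]; exact CStarModuleRight.inner_self.mpr rfl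
      constructor
      · simp [h0]
      · simp [h0]
    · obtain ⟨c, hc, hlow⟩ := core_lower_bound η hGen
      refine ⟨c, (∑ j, ‖η j‖ ^ 2) + 1, hc, by positivity, fun ξ => ?_⟩
      refine ⟨?_, upper ξ⟩
      have hsa := frameOp_isSelfAdjoint η
      have hpos := inner_frameOp_self_nonneg η
      have hlow' : ∀ ζ : E, c * ‖ζ‖ ^ 2 ≤ ‖inner (𝕜 := A) ζ ((↑(frameOp η) : E →L[ℂ] E) ζ)‖ := by
        intro ζ
        rw [inner_frameOp_self]
        exact hlow ζ
      have hspec := spectrum_lower_bound (frameOp η) hsa hpos hlow'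
      have hcoer := coercive_of_spectrum_lower (frameOp η) hsa hspec ξ
      rw [inner_frameOp_self] at hcoer
      rw [Complex.coe_smul]
      exact hcoer
end

section
/- Let E be a Hilbert C*-module over a C*-algebra A, let η₁, …, η_k ∈ E, and let Θ : E → E be the module frame operator Θξ = Σ_{j=1}^k η_j · ⟨η_j, ξ⟩_A. Then there exist constants C, D > 0 such that C·⟨ξ,ξ⟩_A ≤ Σ_{j=1}^k ⟨ξ,η_j⟩_A·⟨η_j,ξ⟩_A ≤ D·⟨ξ,ξ⟩_A for all ξ ∈ E (i.e. (η₁,…,η_k) is a module frame for E) if and only if Θ is a bijection of E onto E. -/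
open scoped RightActions
set_option linter.unusedSectionVars false
set_option synthInstance.maxHeartbeats 1000000
set_option maxHeartbeats 1000000

/-- The Hilbert C*-module class with its older (right-module) meaning: Mathlib's `CStarModule`
now describes left modules (`SMul A E`). -/
class RightCStarModule (A E : Type*) [NonUnitalSemiring A] [StarRing A]
    [Module ℂ A] [AddCommGroup E] [Module ℂ E] [PartialOrder A] [SMul Aᵐᵒᵖ E] [Norm A] [Norm E]
    extends Inner A E where
  inner_add_right {x} {y} {z} : inner x (y + z) = inner x y + inner x z
  inner_self_nonneg {x} : 0 ≤ inner x x
  inner_self {x} : inner x x = 0 ↔ x = 0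
  inner_op_smul_right {a : A} {x y : E} : inner x (y <• a) = inner x y * a
  inner_smul_right_complex {z : ℂ} {x} {y} : inner x (z • y) = z • inner x y
  star_inner x y : star (inner x y) = inner y x
  norm_eq_sqrt_norm_inner_self x : ‖x‖ = √‖inner x x‖

attribute [simp] RightCStarModule.inner_add_right RightCStarModule.star_inner
  RightCStarModule.inner_op_smul_right RightCStarModule.inner_smul_right_complex

namespace RightCStarModule

variable {A E : Type*} [NonUnitalCStarAlgebra A] [PartialOrder A] [StarOrderedRing A]
  [NormedAddCommGroup E] [NormedSpace ℂ E] [SMul Aᵐᵒᵖ E] [RightCStarModule A E]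

local notation "⟪" x ", " y "⟫" => inner A x y

@[simp]
lemma inner_add_left {x y z : E} : ⟪x + y, z⟫ = ⟪x, z⟫ + ⟪y, z⟫ := by
  rw [← star_star (r := ⟪x + y, z⟫)]
  simp only [inner_add_right, star_add, star_inner]

@[simp]
lemma inner_op_smul_left {a : A} {x y : E} : ⟪x <• a, y⟫ = star a * ⟪x, y⟫ := by
  rw [← star_inner]; simp

@[simp]
lemma inner_smul_left_complex {z : ℂ} {x y : E} : ⟪z • x, y⟫ = star z • ⟪x, y⟫ := by
  rw [← star_inner]
  simp

@[simp]
lemma inner_smul_left_real {z : ℝ} {x y : E} : ⟪z • x, y⟫ = z • ⟪x, y⟫ := by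
  have h₁ : z • x = (z : ℂ) • x := by simp
  rw [h₁, ← star_inner, inner_smul_right_complex]
  simp

@[simp]
lemma inner_smul_right_real {z : ℝ} {x y : E} : ⟪x, z • y⟫ = z • ⟪x, y⟫ := by
  have h₁ : z • y = (z : ℂ) • y := by simp
  rw [h₁, ← star_inner, inner_smul_left_complex]
  simp

/-- The inner product as a sesquilinear map. -/
def innerₛₗ : E →ₗ⋆[ℂ] E →ₗ[ℂ] A where
  toFun x := { toFun := fun y => ⟪x, y⟫
               map_add' := fun z y => by simp
               map_smul' := fun z y => by simp }
  map_add' z y := by ext; simp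
  map_smul' z y := by ext; simp

lemma innerₛₗ_apply {x y : E} : innerₛₗ (A := A) x y = ⟪x, y⟫ := rfl

@[simp] lemma inner_zero_right {x : E} : ⟪x, 0⟫ = 0 := by simp [← innerₛₗ_apply]
@[simp] lemma inner_zero_left {x : E} : ⟪0, x⟫ = 0 := by simp [← innerₛₗ_apply]
@[simp] lemma inner_neg_right {x y : E} : ⟪x, -y⟫ = -⟪x, y⟫ := by simp [← innerₛₗ_apply]
@[simp] lemma inner_neg_left {x y : E} : ⟪-x, y⟫ = -⟪x, y⟫ := by simp [← innerₛₗ_apply]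
@[simp] lemma inner_sub_right {x y z : E} : ⟪x, y - z⟫ = ⟪x, y⟫ - ⟪x, z⟫ := by
  simp [← innerₛₗ_apply]
@[simp] lemma inner_sub_left {x y z : E} : ⟪x - y, z⟫ = ⟪x, z⟫ - ⟪y, z⟫ := by
  simp [← innerₛₗ_apply]

@[simp]
lemma inner_sum_right {ι : Type*} {s : Finset ι} {x : E} {y : ι → E} :
    ⟪x, ∑ i ∈ s, y i⟫ = ∑ i ∈ s, ⟪x, y i⟫ :=
  map_sum (innerₛₗ x) ..

@[simp]
lemma inner_sum_left {ι : Type*} {s : Finset ι} {x : ι → E} {y : E} :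
    ⟪∑ i ∈ s, x i, y⟫ = ∑ i ∈ s, ⟪x i, y⟫ :=
  map_sum (innerₛₗ.flip y) ..

lemma norm_sq_eq {x : E} : ‖x‖ ^ 2 = ‖⟪x, x⟫‖ := by
  simp [norm_eq_sqrt_norm_inner_self (A := A)]

lemma inner_mul_inner_swap_le {x y : E} : ⟪y, x⟫ * ⟪x, y⟫ ≤ ‖x‖ ^ 2 • ⟪y, y⟫ := by
  rcases eq_or_ne x 0 with h | h
  · simp [h]
  · have h₁ : ∀ (a : A),
        (0 : A) ≤ ‖x‖ ^ 2 • (star a * a) - ‖x‖ ^ 2 • (⟪y, x⟫ * a)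
                  - ‖x‖ ^ 2 • (star a * ⟪x, y⟫) + ‖x‖ ^ 2 • (‖x‖ ^ 2 • ⟪y, y⟫) := fun a => by
      calc (0 : A) ≤ ⟪x <• a - ‖x‖ ^ 2 • y, x <• a - ‖x‖ ^ 2 • y⟫ := by
                      exact inner_self_nonneg
            _ = star a * ⟪x, x⟫ * a - ‖x‖ ^ 2 • (⟪y, x⟫ * a)
                  - ‖x‖ ^ 2 • (star a * ⟪x, y⟫) + ‖x‖ ^ 2 • (‖x‖ ^ 2 • ⟪y, y⟫) := by
                      simp only [inner_sub_right, inner_op_smul_right, inner_sub_left,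
                        inner_op_smul_left, inner_smul_left_real, sub_mul, smul_mul_assoc,
                        inner_smul_right_real, smul_sub, mul_assoc]
                      abel
            _ ≤ ‖x‖ ^ 2 • (star a * a) - ‖x‖ ^ 2 • (⟪y, x⟫ * a)
                  - ‖x‖ ^ 2 • (star a * ⟪x, y⟫) + ‖x‖ ^ 2 • (‖x‖ ^ 2 • ⟪y, y⟫) := by
                      gcongr
                      calc _ ≤ ‖⟪x, x⟫‖ • (star a * a) :=
                          CStarAlgebra.star_left_conjugate_le_norm_smul (star_inner _ _)
                        _ = ‖x‖ ^ 2 • (star a * a) := by rw [norm_sq_eq (A := A)]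
    specialize h₁ ⟪x, y⟫
    simp only [star_inner, sub_self, zero_sub, le_neg_add_iff_add_le, add_zero] at h₁
    rwa [smul_le_smul_iff_of_pos_left (pow_pos (norm_pos_iff.mpr h) _)] at h₁

variable (E) in
lemma norm_inner_le {x y : E} : ‖⟪x, y⟫‖ ≤ ‖x‖ * ‖y‖ := by
  have := calc ‖⟪x, y⟫‖ ^ 2 = ‖⟪y, x⟫ * ⟪x, y⟫‖ := by
                rw [← star_inner x, CStarRing.norm_star_mul_self, pow_two]
    _ ≤ ‖‖x‖ ^ 2 • ⟪y, y⟫‖ := by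
                refine CStarAlgebra.norm_le_norm_of_nonneg_of_le ?_ inner_mul_inner_swap_le
                rw [← star_inner x]
                exact star_mul_self_nonneg _
    _ = ‖x‖ ^ 2 * ‖⟪y, y⟫‖ := by simp [norm_smul]
    _ = ‖x‖ ^ 2 * ‖y‖ ^ 2 := by rw [norm_sq_eq (A := A) (x := y)]
    _ = (‖x‖ * ‖y‖) ^ 2 := by simp only [mul_pow]
  exact le_of_pow_le_pow_left₀ two_ne_zero (by positivity) this

/-- The inner product as a continuous sesquilinear map. -/
noncomputable def innerSL : E →L⋆[ℂ] E →L[ℂ] A :=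
  LinearMap.mkContinuous₂ (innerₛₗ : E →ₗ⋆[ℂ] E →ₗ[ℂ] A) 1 <| fun x y => by
    simp [innerₛₗ_apply, norm_inner_le E]

lemma innerSL_apply {x y : E} : innerSL x y = ⟪x, y⟫ := rfl

lemma continuous_inner : Continuous (fun x : E × E => ⟪x.1, x.2⟫) := by
  simp_rw [← innerSL_apply]
  fun_prop

end RightCStarModule

namespace FrameProofAux

variable {A E : Type*} [NonUnitalCStarAlgebra A] [PartialOrder A] [StarOrderedRing A]
  [NormedAddCommGroup E] [NormedSpace ℂ E] [SMul Aᵐᵒᵖ E] [RightCStarModule A E] [CompleteSpace E]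

local notation "⟪" x ", " y "⟫" => inner (𝕜 := A) x y

lemma ext_left {x y : E} (h : ∀ z : E, ⟪z, x⟫ = ⟪z, y⟫) : x = y := by
  have h0 : ⟪x - y, x - y⟫ = (0 : A) := by
    rw [RightCStarModule.inner_sub_right, h (x - y), sub_self]
  exact sub_eq_zero.mp (RightCStarModule.inner_self.mp h0)

lemma norm_op_smul_le (x : E) (a : A) : ‖x <• a‖ ≤ ‖x‖ * ‖a‖ := by
  have h2 : ‖x <• a‖ ^ 2 ≤ (‖x‖ * ‖a‖) ^ 2 := by
    rw [RightCStarModule.norm_sq_eq (A := A), RightCStarModule.inner_op_smul_left, RightCStarModule.inner_op_smul_right]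
    calc ‖star a * (⟪x, x⟫ * a)‖ ≤ ‖star a‖ * (‖⟪x, x⟫‖ * ‖a‖) :=
          (norm_mul_le _ _).trans (by gcongr; exact norm_mul_le _ _)
      _ = ‖⟪x, x⟫‖ * (‖a‖ * ‖a‖) := by rw [norm_star]; ring
      _ ≤ ‖x‖ ^ 2 * (‖a‖ * ‖a‖) := by rw [← RightCStarModule.norm_sq_eq (A := A)]
      _ = (‖x‖ * ‖a‖) ^ 2 := by ring
  exact le_of_pow_le_pow_left₀ two_ne_zero (by positivity) h2

/-- `S` is an adjoint for `T`. -/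
def IsAdj (T S : E →L[ℂ] E) : Prop := ∀ x y : E, ⟪T x, y⟫ = ⟪x, S y⟫

lemma IsAdj.symm {T S : E →L[ℂ] E} (h : IsAdj (A := A) T S) : IsAdj (A := A) S T := by
  intro x y
  calc ⟪S x, y⟫ = star ⟪y, S x⟫ := (RightCStarModule.star_inner _ _).symm
    _ = star ⟪T y, x⟫ := by rw [h y x]
    _ = ⟪x, T y⟫ := RightCStarModule.star_inner _ _

lemma IsAdj.norm_apply_le {T S : E →L[ℂ] E} (h : IsAdj (A := A) T S) (y : E) :
    ‖S y‖ ≤ ‖T‖ * ‖y‖ := by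
  rcases eq_or_lt_of_le (norm_nonneg (S y)) with h0 | h0
  · rw [← h0]; positivity
  · have key : ‖S y‖ ^ 2 ≤ (‖T‖ * ‖y‖) * ‖S y‖ := by
      rw [RightCStarModule.norm_sq_eq (A := A), ← h (S y) y]
      calc ‖⟪T (S y), y⟫‖ ≤ ‖T (S y)‖ * ‖y‖ := RightCStarModule.norm_inner_le E
        _ ≤ (‖T‖ * ‖S y‖) * ‖y‖ := by gcongr; exact T.le_opNorm _
        _ = (‖T‖ * ‖y‖) * ‖S y‖ := by ring
    rw [pow_two] at key
    exact le_of_mul_le_mul_right key h0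

lemma IsAdj.unique {T S S' : E →L[ℂ] E} (h : IsAdj (A := A) T S) (h' : IsAdj (A := A) T S') : S = S' := by
  ext y
  exact ext_left fun z => by rw [← h z y, h' z y]

variable (A E) in
/-- The subalgebra of adjointable operators on a Hilbert C*-module. -/
def adjSet : Subalgebra ℂ (E →L[ℂ] E) where
  carrier := {T | ∃ S, IsAdj (A := A) T S}
  mul_mem' := by
    rintro T T' ⟨S, hS⟩ ⟨S', hS'⟩
    exact ⟨S' * S, fun x y => by
      simp only [ContinuousLinearMap.mul_apply]
      rw [hS (T' x) y, hS' x (S y)]⟩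
  add_mem' := by
    rintro T T' ⟨S, hS⟩ ⟨S', hS'⟩
    exact ⟨S + S', fun x y => by
      simp only [ContinuousLinearMap.add_apply, RightCStarModule.inner_add_left, RightCStarModule.inner_add_right,
        hS x y, hS' x y]⟩
  algebraMap_mem' := by
    intro c
    refine ⟨star c • 1, fun x y => ?_⟩
    simp only [Algebra.algebraMap_eq_smul_one, ContinuousLinearMap.smul_apply,
      ContinuousLinearMap.one_apply, RightCStarModule.inner_smul_left_complex, RightCStarModule.inner_smul_right_complex]

lemma isClosed_adjSet : IsClosed ((adjSet A E : Set (E →L[ℂ] E))) := by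
  rw [← isSeqClosed_iff_isClosed]
  rintro u T hu hlim
  choose S hS using hu
  have hcau : CauchySeq S := by
    have hc : CauchySeq u := hlim.cauchySeq
    rw [Metric.cauchySeq_iff] at hc ⊢
    intro ε hε
    obtain ⟨N, hN⟩ := hc ε hε
    refine ⟨N, fun m hm n hn => ?_⟩
    have hd : IsAdj (A := A) (u m - u n) (S m - S n) := fun x y => by
      simp only [ContinuousLinearMap.sub_apply, RightCStarModule.inner_sub_left, RightCStarModule.inner_sub_right,
        hS m x y, hS n x y]
    have : ‖S m - S n‖ ≤ ‖u m - u n‖ :=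
      ContinuousLinearMap.opNorm_le_bound _ (norm_nonneg _) hd.norm_apply_le
    calc dist (S m) (S n) = ‖S m - S n‖ := dist_eq_norm _ _
      _ ≤ ‖u m - u n‖ := this
      _ = dist (u m) (u n) := (dist_eq_norm _ _).symm
      _ < ε := hN m hm n hn
  obtain ⟨L, hL⟩ := cauchySeq_tendsto_of_complete hcau
  refine ⟨L, fun x y => ?_⟩
  have hx : Filter.Tendsto (fun n => u n x) Filter.atTop (nhds (T x)) :=
    ((ContinuousLinearMap.apply ℂ E x).continuous.tendsto T).comp hlim
  have hy : Filter.Tendsto (fun n => S n y) Filter.atTop (nhds (L y)) :=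
    ((ContinuousLinearMap.apply ℂ E y).continuous.tendsto L).comp hL
  have h1 : Filter.Tendsto (fun n => ⟪u n x, y⟫) Filter.atTop (nhds ⟪T x, y⟫) :=
    ((RightCStarModule.continuous_inner (A := A) (E := E)).tendsto (T x, y)).comp
      (hx.prodMk_nhds tendsto_const_nhds)
  have h2 : Filter.Tendsto (fun n => ⟪x, S n y⟫) Filter.atTop (nhds ⟪x, L y⟫) :=
    ((RightCStarModule.continuous_inner (A := A) (E := E)).tendsto (x, L y)).comp
      (tendsto_const_nhds.prodMk_nhds hy)
  have heq : (fun n => ⟪u n x, y⟫) = fun n => ⟪x, S n y⟫ := funext fun n => hS n x y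
  rw [heq] at h1
  exact tendsto_nhds_unique h1 h2

section AlgebraInstances

variable (A E) in
lemma adjSet_coe_norm (T : adjSet A E) : ‖T‖ = ‖T.1‖ := rfl

noncomputable instance : Star (adjSet A E) :=
  ⟨fun T => ⟨T.2.choose, T.1, T.2.choose_spec.symm⟩⟩

lemma star_spec (T : adjSet A E) : IsAdj (A := A) T.1 (star T).1 := T.2.choose_spec

lemma star_spec' (T : adjSet A E) : IsAdj (A := A) (star T).1 T.1 := (star_spec T).symm

lemma star_eq_of {T S : adjSet A E} (h : IsAdj (A := A) T.1 S.1) : star T = S :=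
  Subtype.ext ((star_spec T).unique h)

noncomputable instance : StarRing (adjSet A E) where
  star_involutive T := star_eq_of (star_spec' T)
  star_mul a b := star_eq_of (by
    intro x y
    show ⟪(a.1 * b.1) x, y⟫ = ⟪x, ((star b).1 * (star a).1) y⟫
    simp only [ContinuousLinearMap.mul_apply]
    rw [star_spec a (b.1 x) y, star_spec b x ((star a).1 y)])
  star_add a b := star_eq_of (by
    intro x y
    show ⟪(a.1 + b.1) x, y⟫ = ⟪x, ((star a).1 + (star b).1) y⟫
    simp only [ContinuousLinearMap.add_apply, RightCStarModule.inner_add_left,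
      RightCStarModule.inner_add_right, star_spec a x y, star_spec b x y])

noncomputable instance : StarModule ℂ (adjSet A E) where
  star_smul c T := star_eq_of (by
    intro x y
    show ⟪(c • T.1) x, y⟫ = ⟪x, (star c • (star T).1) y⟫
    simp only [ContinuousLinearMap.smul_apply, RightCStarModule.inner_smul_left_complex,
      RightCStarModule.inner_smul_right_complex, star_spec T x y])

instance : CompleteSpace (adjSet A E) := (isClosed_adjSet (A := A) (E := E)).completeSpace_coe

noncomputable instance : CStarRing (adjSet A E) where
  norm_mul_self_le T := by
    have key : ∀ x : E, ‖T.1 x‖ ≤ Real.sqrt ‖star T * T‖ * ‖x‖ := by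
      intro x
      have h2 : ‖T.1 x‖ ^ 2 ≤ ‖star T * T‖ * ‖x‖ ^ 2 := by
        rw [RightCStarModule.norm_sq_eq (A := A), star_spec T x (T.1 x)]
        have : (star T).1 (T.1 x) = (star T * T).1 x := rfl
        rw [this]
        calc ‖⟪x, (star T * T).1 x⟫‖ ≤ ‖x‖ * ‖(star T * T).1 x‖ := RightCStarModule.norm_inner_le E
          _ ≤ ‖x‖ * (‖(star T * T).1‖ * ‖x‖) := by gcongr; exact ContinuousLinearMap.le_opNorm _ _
          _ = ‖star T * T‖ * ‖x‖ ^ 2 := by rw [← adjSet_coe_norm]; ring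
      have h3 : ‖T.1 x‖ ^ 2 ≤ (Real.sqrt ‖star T * T‖ * ‖x‖) ^ 2 := by
        rwa [mul_pow, Real.sq_sqrt (by positivity)]
      exact le_of_pow_le_pow_left₀ two_ne_zero (by positivity) h3
    have hop : ‖T.1‖ ≤ Real.sqrt ‖star T * T‖ :=
      ContinuousLinearMap.opNorm_le_bound _ (Real.sqrt_nonneg _) key
    calc ‖T‖ * ‖T‖ ≤ Real.sqrt ‖star T * T‖ * Real.sqrt ‖star T * T‖ := by
          rw [adjSet_coe_norm]; exact mul_le_mul hop hop (norm_nonneg _) (Real.sqrt_nonneg _)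
      _ = ‖star T * T‖ := Real.mul_self_sqrt (norm_nonneg _)

noncomputable instance : CStarAlgebra (adjSet A E) where

end AlgebraInstances

section FrameOp

variable {k : ℕ}

noncomputable def frameOp (η : Fin k → E) : E →L[ℂ] E :=
  LinearMap.mkContinuous
    { toFun := fun ξ => ∑ j, η j <• (⟪η j, ξ⟫ : A)
      map_add' := fun x y => ext_left (A := A) fun z => by
        simp only [RightCStarModule.inner_sum_right, RightCStarModule.inner_op_smul_right]
        simp [RightCStarModule.inner_add_right, mul_add, Finset.sum_add_distrib]
      map_smul' := fun c x => ext_left (A := A) fun z => by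
        simp only [RightCStarModule.inner_sum_right, RightCStarModule.inner_op_smul_right]
        simp [RightCStarModule.inner_smul_right_complex, mul_smul_comm, Finset.smul_sum] }
    (∑ j, ‖η j‖ * ‖η j‖)
    (fun ξ => by
      show ‖∑ j, η j <• (⟪η j, ξ⟫ : A)‖ ≤ (∑ j, ‖η j‖ * ‖η j‖) * ‖ξ‖
      refine (norm_sum_le _ _).trans ?_
      rw [Finset.sum_mul]
      refine Finset.sum_le_sum fun j _ => ?_
      calc ‖η j <• (⟪η j, ξ⟫ : A)‖ ≤ ‖η j‖ * ‖⟪η j, ξ⟫‖ := norm_op_smul_le _ _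
        _ ≤ ‖η j‖ * (‖η j‖ * ‖ξ‖) := by
            gcongr; exact RightCStarModule.norm_inner_le E
        _ = ‖η j‖ * ‖η j‖ * ‖ξ‖ := by ring)

lemma frameOp_apply (η : Fin k → E) (ξ : E) : frameOp (A := A) η ξ = ∑ j, η j <• (⟪η j, ξ⟫ : A) := rfl

lemma inner_frameOp (η : Fin k → E) (x ξ : E) :
    ⟪x, frameOp (A := A) η ξ⟫ = ∑ j, ⟪x, η j⟫ * ⟪η j, ξ⟫ := by
  simp [frameOp_apply, RightCStarModule.inner_sum_right, RightCStarModule.inner_op_smul_right]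

lemma frameOp_inner (η : Fin k → E) (x ξ : E) :
    ⟪frameOp (A := A) η x, ξ⟫ = ∑ j, ⟪x, η j⟫ * ⟪η j, ξ⟫ := by
  simp only [frameOp_apply, RightCStarModule.inner_sum_left, RightCStarModule.inner_op_smul_left]
  exact Finset.sum_congr rfl fun j _ => by rw [RightCStarModule.star_inner]

lemma frameOp_isAdj (η : Fin k → E) : IsAdj (A := A) (frameOp (A := A) η) (frameOp (A := A) η) := fun x y => by
  rw [frameOp_inner, inner_frameOp]

noncomputable def frameOpA (η : Fin k → E) : adjSet A E :=
  ⟨frameOp (A := A) η, frameOp (A := A) η, frameOp_isAdj η⟩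

lemma isSelfAdjoint_frameOpA (η : Fin k → E) : IsSelfAdjoint (frameOpA (A := A) η) :=
  star_eq_of (frameOp_isAdj η)

end FrameOp

section Spectral

lemma normOneClass [Nontrivial E] : NormOneClass (adjSet A E) :=
  ⟨by rw [adjSet_coe_norm, OneMemClass.coe_one]; exact ContinuousLinearMap.norm_id⟩

lemma not_mem_spectrum_of_bddBelow [Nontrivial E] (T : adjSet A E) (hT : IsSelfAdjoint T)
    {t c : ℝ} (hc : 0 < c) (hbdd : ∀ ξ : E, c * ‖ξ‖ ≤ ‖T.1 ξ - t • ξ‖) :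
    t ∉ spectrum ℝ T := by
  have : NormOneClass (adjSet A E) := normOneClass
  intro ht
  set δ : ℝ := c / 3 with hδ
  have hδpos : 0 < δ := by positivity
  set g : ℝ → ℝ := fun s => max (1 - |s - t| / δ) 0 with hgdef
  have hg : Continuous g := by fun_prop
  set x : adjSet A E := cfc g T with hx
  have hx1 : (1 : ℝ) ≤ ‖x‖ := by
    have h1 : (1 : ℝ) ∈ spectrum ℝ x := by
      rw [hx, cfc_map_spectrum (hf := hg.continuousOn)]
      exact ⟨t, ht, by simp [hgdef]⟩
    simpa [adjSet_coe_norm] using spectrum.norm_le_norm_of_mem h1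
  set y : adjSet A E := (T - algebraMap ℝ (adjSet A E) t) * x with hy
  have hyc : y = cfc (fun s => (s - t) * g s) T := by
    rw [hy, hx, cfc_mul (fun s => s - t) g T (by fun_prop) (by fun_prop),
      cfc_sub (fun s : ℝ => s) (fun _ : ℝ => t) T, cfc_id' ℝ T, cfc_const t T]
  have hynorm : ‖y‖ ≤ δ := by
    rw [hyc]
    refine norm_cfc_le hδpos.le fun s hs => ?_
    rcases le_or_gt |s - t| δ with h | h
    · calc ‖(s - t) * g s‖ = |s - t| * |g s| := abs_mul _ _
        _ ≤ δ * 1 := by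
            refine mul_le_mul h ?_ (abs_nonneg _) hδpos.le
            rw [abs_of_nonneg (le_max_right _ _)]
            exact max_le (by linarith [abs_nonneg (s - t), div_nonneg (abs_nonneg (s-t)) hδpos.le]) zero_le_one
        _ = δ := mul_one δ
    · have hg0 : g s = 0 := by
        rw [hgdef]
        simp only [max_eq_right_iff]
        have : (1:ℝ) ≤ |s - t| / δ := (one_le_div hδpos).mpr h.le
        linarith
      simp [hg0, hδpos.le]
  obtain ⟨ξ, hξ⟩ : ∃ ξ : E, ¬(‖x.1 ξ‖ ≤ (1/2) * ‖ξ‖) := by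
    by_contra hcon
    push_neg at hcon
    have : ‖x.1‖ ≤ 1/2 := ContinuousLinearMap.opNorm_le_bound _ (by norm_num) hcon
    rw [← adjSet_coe_norm] at this
    linarith
  push_neg at hξ
  have hx0 : 0 < ‖x.1 ξ‖ := lt_of_le_of_lt (by positivity) hξ
  have h2 : c * ‖x.1 ξ‖ ≤ ‖T.1 (x.1 ξ) - t • (x.1 ξ)‖ := hbdd _
  have halg : ∀ v : E, ((algebraMap ℝ (adjSet A E) t).1 : E →L[ℂ] E) v = t • v :=
    fun v => rfl
  have h3 : T.1 (x.1 ξ) - t • (x.1 ξ) = y.1 ξ := by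
    rw [hy]
    show T.1 (x.1 ξ) - t • (x.1 ξ)
      = (((T - algebraMap ℝ (adjSet A E) t) * x : adjSet A E) : E →L[ℂ] E) ξ
    rw [MulMemClass.coe_mul, AddSubgroupClass.coe_sub, ContinuousLinearMap.mul_apply,
      ContinuousLinearMap.sub_apply, halg]
  have h4 : ‖y.1 ξ‖ ≤ δ * ‖ξ‖ := by
    calc ‖y.1 ξ‖ ≤ ‖y.1‖ * ‖ξ‖ := ContinuousLinearMap.le_opNorm _ _
      _ ≤ δ * ‖ξ‖ := by gcongr; rw [← adjSet_coe_norm]; exact hynorm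
  have h5 : ‖ξ‖ ≤ 2 * ‖x.1 ξ‖ := by
    have := hξ; linarith
  have : c * ‖x.1 ξ‖ ≤ (c / 3) * (2 * ‖x.1 ξ‖) := by
    calc c * ‖x.1 ξ‖ ≤ ‖T.1 (x.1 ξ) - t • (x.1 ξ)‖ := h2
      _ = ‖y.1 ξ‖ := by rw [h3]
      _ ≤ δ * ‖ξ‖ := h4
      _ ≤ (c / 3) * (2 * ‖x.1 ξ‖) := by rw [hδ] at *; gcongr
  nlinarith [hx0, hc]

end Spectral

section Helpers

variable {k : ℕ}

lemma sum_inner_eq (η : Fin k → E) (ξ : E) :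
    ∑ j, ⟪ξ, η j⟫ * ⟪η j, ξ⟫ = ⟪ξ, frameOp (A := A) η ξ⟫ := (inner_frameOp (A := A) η ξ ξ).symm

lemma sum_inner_nonneg (η : Fin k → E) (ξ : E) : (0:A) ≤ ∑ j, ⟪ξ, η j⟫ * ⟪η j, ξ⟫ := by
  refine Finset.sum_nonneg fun j _ => ?_
  rw [← RightCStarModule.star_inner ξ (η j)]
  exact mul_star_self_nonneg _

lemma real_smul_inner_nonneg {r : ℝ} (hr : 0 ≤ r) (ξ : E) : (0:A) ≤ r • ⟪ξ, ξ⟫ := by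
  have h : r • (⟪ξ, ξ⟫ : A) = ⟪(Real.sqrt r) • ξ, (Real.sqrt r) • ξ⟫ := by
    rw [RightCStarModule.inner_smul_left_real, RightCStarModule.inner_smul_right_real, smul_smul,
      Real.mul_self_sqrt hr]
  rw [h]
  exact RightCStarModule.inner_self_nonneg

lemma key_norm (ξ v : E) {r : ℝ} (hr : 0 ≤ r) (h : r • (⟪ξ, ξ⟫ : A) ≤ ⟪ξ, v⟫) :
    r * ‖ξ‖ ≤ ‖v‖ := by
  have h1 : r * ‖ξ‖ ^ 2 = ‖r • (⟪ξ, ξ⟫ : A)‖ := by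
    rw [norm_smul, Real.norm_eq_abs, abs_of_nonneg hr, RightCStarModule.norm_sq_eq (A := A)]
  have h2 : ‖r • (⟪ξ, ξ⟫ : A)‖ ≤ ‖(⟪ξ, v⟫ : A)‖ :=
    CStarAlgebra.norm_le_norm_of_nonneg_of_le (real_smul_inner_nonneg hr ξ) h
  have h3 : ‖(⟪ξ, v⟫ : A)‖ ≤ ‖ξ‖ * ‖v‖ := RightCStarModule.norm_inner_le E
  rcases eq_or_ne ξ 0 with h0 | h0
  · simp [h0]
  · have hξ : 0 < ‖ξ‖ := norm_pos_iff.mpr h0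
    have : (r * ‖ξ‖) * ‖ξ‖ ≤ ‖v‖ * ‖ξ‖ := by
      calc (r * ‖ξ‖) * ‖ξ‖ = r * ‖ξ‖ ^ 2 := by ring
        _ ≤ ‖ξ‖ * ‖v‖ := h1 ▸ h2.trans h3
        _ = ‖v‖ * ‖ξ‖ := by ring
    exact le_of_mul_le_mul_right this hξ

lemma sum_le_D (η : Fin k → E) (ξ : E) :
    ∑ j, ⟪ξ, η j⟫ * ⟪η j, ξ⟫ ≤ (∑ j, ‖η j‖ ^ 2 : ℝ) • (⟪ξ, ξ⟫ : A) := by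
  rw [Finset.sum_smul]
  exact Finset.sum_le_sum fun j _ => RightCStarModule.inner_mul_inner_swap_le

end Helpers

end FrameProofAux

section MainTheorem
open FrameProofAux


/-- Let `E` be a Hilbert C*-module over a C*-algebra `A`, let
`η₁, …, η_k ∈ E`, and let `Θ : E → E` be the module frame operator
`Θξ = Σ_j η_j · ⟪η_j, ξ⟫`.  Then there exist constants `C, D > 0` such that
`C·⟪ξ,ξ⟫ ≤ Σ_j ⟪ξ,η_j⟫·⟪η_j,ξ⟫ ≤ D·⟪ξ,ξ⟫` for all `ξ ∈ E` (i.e. `(η₁,…,η_k)` is a module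
frame for `E`) if and only if `Θ` is a bijection of `E` onto `E`. -/
theorem finite_module_frame_iff_frame_operator_bijective
    {A E : Type*} [NonUnitalCStarAlgebra A] [PartialOrder A] [StarOrderedRing A]
    [NormedAddCommGroup E] [NormedSpace ℂ E] [SMul Aᵐᵒᵖ E] [RightCStarModule A E]
    [CompleteSpace E]
    (k : ℕ) (η : Fin k → E)
    (Θ : E → E) (hΘ : ∀ ξ : E, Θ ξ = ∑ j, η j <• (inner (𝕜 := A) (η j) ξ)) :
    (∃ C D : ℝ, 0 < C ∧ 0 < D ∧ ∀ ξ : E,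
        (C : ℂ) • (inner (𝕜 := A) ξ ξ) ≤
          ∑ j, inner (𝕜 := A) ξ (η j) * inner (𝕜 := A) (η j) ξ ∧
        ∑ j, inner (𝕜 := A) ξ (η j) * inner (𝕜 := A) (η j) ξ ≤
          (D : ℂ) • (inner (𝕜 := A) ξ ξ)) ↔
    Function.Bijective Θ := by
  have hfun : Θ = ⇑(frameOp (A := A) η) := funext fun ξ => by rw [hΘ ξ, frameOp_apply]
  rw [hfun]
  constructor
  · rintro ⟨C, D, hC, hD, hCD⟩
    rcases subsingleton_or_nontrivial E with hE | hE
    · exact ⟨fun a b _ => Subsingleton.elim a b, fun b => ⟨b, Subsingleton.elim _ _⟩⟩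
    have hsa := isSelfAdjoint_frameOpA (A := A) η
    have hbdd : ∀ ξ : E, C * ‖ξ‖ ≤ ‖(frameOpA (A := A) η).1 ξ - (0:ℝ) • ξ‖ := by
      intro ξ
      rw [zero_smul, sub_zero]
      refine key_norm (A := A) ξ _ hC.le ?_
      have h := (hCD ξ).1
      rw [Complex.coe_smul, sum_inner_eq] at h
      exact h
    have h0 := not_mem_spectrum_of_bddBelow (frameOpA (A := A) η) hsa hC hbdd
    rw [spectrum.notMem_iff, map_zero, zero_sub] at h0
    have hunit : IsUnit (frameOpA (A := A) η) := by simpa [neg_neg] using h0.neg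
    obtain ⟨u, hu⟩ := hunit
    refine Function.bijective_iff_has_inverse.mpr ⟨(↑u⁻¹ : adjSet A E).1, fun ξ => ?_, fun ξ => ?_⟩
    · have h1 : ((↑u⁻¹ : adjSet A E) * frameOpA (A := A) η) = 1 := by rw [← hu]; exact u.inv_mul
      have h2 := congrArg (fun T : adjSet A E => (T.1 : E →L[ℂ] E) ξ) h1
      simpa [frameOpA, MulMemClass.coe_mul, OneMemClass.coe_one, ContinuousLinearMap.mul_apply] using h2
    · have h1 : (frameOpA (A := A) η * (↑u⁻¹ : adjSet A E)) = 1 := by rw [← hu]; exact u.mul_inv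
      have h2 := congrArg (fun T : adjSet A E => (T.1 : E →L[ℂ] E) ξ) h1
      simpa [frameOpA, MulMemClass.coe_mul, OneMemClass.coe_one, ContinuousLinearMap.mul_apply] using h2
  · intro hbij
    rcases subsingleton_or_nontrivial E with hE | hE
    · refine ⟨1, 1, one_pos, one_pos, fun ξ => ?_⟩
      have hz : ξ = (0 : E) := Subsingleton.elim _ _
      constructor <;> simp [hz]
    have hsa := isSelfAdjoint_frameOpA (A := A) η
    set G := ContinuousLinearEquiv.ofBijective (frameOp (A := A) η)
      (LinearMap.ker_eq_bot.mpr hbij.1) (LinearMap.range_eq_top.mpr hbij.2) with hGdef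
    have hGapp : ∀ v, frameOp (A := A) η (G.symm v) = v := fun v => by
      have h1 : G (G.symm v) = v := G.apply_symm_apply v
      rwa [show ∀ w, G w = frameOp (A := A) η w from fun w => rfl] at h1
    set Ginv : E →L[ℂ] E := (G.symm : E ≃L[ℂ] E).toContinuousLinearMap with hGinv
    have hGinvapp : ∀ v, Ginv v = G.symm v := fun v => rfl
    have hGadj : IsAdj (A := A) Ginv Ginv := by
      intro x y
      conv_lhs => rw [show y = frameOp (A := A) η (Ginv y) from (hGapp y).symm]
      rw [← frameOp_isAdj η (Ginv x) (Ginv y)]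
      congr 1
      exact hGapp x
    have hunit : IsUnit (frameOpA (A := A) η) := by
      refine ⟨⟨frameOpA (A := A) η, ⟨Ginv, Ginv, hGadj⟩, ?_, ?_⟩, rfl⟩
      · exact Subtype.ext (ContinuousLinearMap.ext fun v => hGapp v)
      · refine Subtype.ext (ContinuousLinearMap.ext fun v => ?_)
        show Ginv (frameOp (A := A) η v) = v
        rw [hGinvapp]
        exact G.symm_apply_apply v
    have hσ : ∀ s ∈ spectrum ℝ (frameOpA (A := A) η), 0 < s := by
      intro s hs
      by_contra hns
      push_neg at hns
      rcases eq_or_lt_of_le hns with h0 | hneg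
      · have hnm : s ∉ spectrum ℝ (frameOpA (A := A) η) := by
          rw [h0, spectrum.notMem_iff, map_zero, zero_sub]
          exact hunit.neg
        exact hnm hs
      · refine not_mem_spectrum_of_bddBelow (frameOpA (A := A) η) hsa (neg_pos.mpr hneg) ?_ hs
        intro ξ
        refine key_norm (A := A) ξ _ (neg_pos.mpr hneg).le ?_
        have hlhs : (inner (𝕜 := A) ξ (frameOp (A := A) η ξ - s • ξ) : A)
            = (∑ j, inner (𝕜 := A) ξ (η j) * inner (𝕜 := A) (η j) ξ) + (-s) • inner (𝕜 := A) ξ ξ := by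
          rw [RightCStarModule.inner_sub_right, RightCStarModule.inner_smul_right_real, ← sum_inner_eq,
            sub_eq_add_neg, neg_smul]
        show (-s) • (inner (𝕜 := A) ξ ξ : A) ≤ inner (𝕜 := A) ξ (frameOp (A := A) η ξ - s • ξ)
        rw [hlhs]
        exact le_add_of_nonneg_left (sum_inner_nonneg η ξ)
    have hNT : Nontrivial (adjSet A E) := by
      obtain ⟨v, hv⟩ := exists_ne (0 : E)
      refine ⟨1, 0, fun h01 => hv ?_⟩
      have h2 := congrArg (fun T : adjSet A E => (T.1 : E →L[ℂ] E) v) h01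
      simpa using h2
    have hN1 : NormOneClass (adjSet A E) := normOneClass
    have hne : (spectrum ℝ (frameOpA (A := A) η)).Nonempty := hsa.spectrum_nonempty
    have hcpt : IsCompact (spectrum ℝ (frameOpA (A := A) η)) :=
      Metric.isCompact_of_isClosed_isBounded (spectrum.isClosed _) (spectrum.isBounded _)
    set c := sInf (spectrum ℝ (frameOpA (A := A) η)) with hc
    have hcmem : c ∈ spectrum ℝ (frameOpA (A := A) η) := hcpt.sInf_mem hne
    have hcpos : 0 < c := hσ c hcmem
    have hcle : ∀ s ∈ spectrum ℝ (frameOpA (A := A) η), c ≤ s := fun s hs => csInf_le hcpt.bddBelow hs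
    set b := cfc (fun s : ℝ => Real.sqrt (s - c)) (frameOpA (A := A) η) with hb
    have hbsa : IsSelfAdjoint b := cfc_predicate _ _
    have hbb : b * b = frameOpA (A := A) η - algebraMap ℝ (adjSet A E) c := by
      rw [hb, ← cfc_mul _ _ (frameOpA (A := A) η) (by fun_prop) (by fun_prop)]
      have hcongr : cfc (fun s : ℝ => Real.sqrt (s - c) * Real.sqrt (s - c)) (frameOpA (A := A) η)
          = cfc (fun s : ℝ => s - c) (frameOpA (A := A) η) :=
        cfc_congr fun s hs => Real.mul_self_sqrt (sub_nonneg.mpr (hcle s hs))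
      rw [hcongr, cfc_sub (fun s : ℝ => s) (fun _ : ℝ => c) (frameOpA (A := A) η), cfc_id' ℝ _,
        cfc_const c _]
    refine ⟨c, (∑ j, ‖η j‖ ^ 2) + 1, hcpos, by positivity, fun ξ => ?_⟩
    constructor
    · have happ : frameOp (A := A) η ξ - c • ξ = b.1 (b.1 ξ) := by
        have h2 := congrArg (fun T : adjSet A E => (T.1 : E →L[ℂ] E) ξ) hbb
        simp only [MulMemClass.coe_mul, AddSubgroupClass.coe_sub,
          ContinuousLinearMap.mul_apply, ContinuousLinearMap.sub_apply] at h2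
        rw [show ((algebraMap ℝ (adjSet A E) c).1 : E →L[ℂ] E) ξ = c • ξ from rfl] at h2
        exact h2.symm
      have hsym : ∀ x y : E, inner (𝕜 := A) (b.1 x) y = inner (𝕜 := A) x (b.1 y) := by
        have h3 := star_spec' b
        rwa [hbsa.star_eq] at h3
      have hpos : (0 : A) ≤ inner (𝕜 := A) ξ (frameOp (A := A) η ξ - c • ξ) := by
        rw [happ, ← hsym ξ (b.1 ξ)]
        exact RightCStarModule.inner_self_nonneg
      rw [RightCStarModule.inner_sub_right, RightCStarModule.inner_smul_right_real, ← sum_inner_eq,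
        sub_nonneg] at hpos
      rw [Complex.coe_smul]
      exact hpos
    · have h4 : ∑ j, inner (𝕜 := A) ξ (η j) * inner (𝕜 := A) (η j) ξ ≤ ((∑ j, ‖η j‖ ^ 2) + 1 : ℝ) • (inner (𝕜 := A) ξ ξ : A) := by
        refine (sum_le_D η ξ).trans ?_
        rw [add_smul, one_smul]
        exact le_add_of_nonneg_right RightCStarModule.inner_self_nonneg
      rw [Complex.coe_smul]
      exact h4

end MainTheorem
end
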